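/- Let Σ be a simplicial quasi-projective fan in ℝ^n with convex support of dimension n. Let τ be an interior wall of Σ with τ(1) = {ρ_1,…,ρ_{n−1}} and with adjacent n-dimensional cones generated by τ(1)∪{ρ_n} and τ(1)∪{ρ_{n+1}}, and let Σ_{i=1}^{n+1} a_iρ_i = 0 with a_n > 0, a_{n+1} = 1 be its wall relation, with associated vector a_τ ∈ ℝ^{Σ(1)} ((a_τ)_{ρ_i} = a_i and 0 elsewhere). Suppose τ is extremal, i.e., l_τ spans an extremal ray of NE(Σ) = Σ_{τ'} ℝ_{≥0}·l_{τ'} (meaning l_τ ≠ 0 and whenever l_τ = x + y with x, y ∈ NE(Σ), both x and y are nonnegative multiples of l_τ). Then: (1) P = { ρ_i : a_i > 0 } is a primitive collection for Σ; and (2) the primitive relation vector a_P ∈ ℝ^{Σ(1)} of P equals a_τ up to a positive constant. -/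

import Mathlib

open Set

noncomputable section

/-- Ambient vector space `ℝ^n`. -/
abbrev V (n : ℕ) := Fin n → ℝ

/-- The cone generated by a set of vectors: all finite nonnegative combinations. -/
def coneGen {n : ℕ} (G : Set (V n)) : Set (V n) :=
  { x | ∃ (t : Finset (V n)) (c : V n → ℝ),
      ↑t ⊆ G ∧ (∀ g ∈ t, 0 ≤ c g) ∧ x = ∑ g ∈ t, c g • g }

/-- A vector with integer coordinates. -/
def IsIntegralVec {n : ℕ} (v : V n) : Prop := ∀ i, ∃ z : ℤ, v i = (z : ℝ)

/-- A rational polyhedral cone: generated by finitely many integral vectors. -/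
def IsRatPolyhedralCone {n : ℕ} (σ : Set (V n)) : Prop :=
  ∃ G : Finset (V n), (∀ g ∈ G, IsIntegralVec g) ∧ σ = coneGen ↑G

/-- A strongly convex cone contains no line. -/
def StronglyConvex {n : ℕ} (σ : Set (V n)) : Prop :=
  ∀ x ∈ σ, -x ∈ σ → x = 0

/-- `τ` is a face of the cone `σ`: cut out by a supporting linear functional. -/
def IsFaceOf {n : ℕ} (τ σ : Set (V n)) : Prop :=
  ∃ m : Module.Dual ℝ (V n), (∀ x ∈ σ, 0 ≤ m x) ∧ τ = σ ∩ {x | m x = 0}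

/-- A fan in `ℝ^n`: a finite collection of strongly convex rational polyhedral
cones, closed under taking faces, such that the intersection of any two cones
is a face of each. -/
structure Fan (n : ℕ) where
  cones : Set (Set (V n))
  finite : cones.Finite
  poly : ∀ σ ∈ cones, IsRatPolyhedralCone σ ∧ StronglyConvex σ
  face_mem : ∀ σ ∈ cones, ∀ τ : Set (V n), IsFaceOf τ σ → τ ∈ cones
  inter_face : ∀ σ ∈ cones, ∀ σ' ∈ cones,
    IsFaceOf (σ ∩ σ') σ ∧ IsFaceOf (σ ∩ σ') σ'

/-- The support of a fan: the union of its cones. -/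
def Fan.support {n : ℕ} (F : Fan n) : Set (V n) := ⋃ σ ∈ F.cones, σ

/-- The dimension of a cone: the dimension of its linear span. -/
def dimCone {n : ℕ} (σ : Set (V n)) : ℕ :=
  Module.finrank ℝ (Submodule.span ℝ σ)

/-- `Σ(k)`: the set of `k`-dimensional cones of the fan. -/
def Fan.conesDim {n : ℕ} (F : Fan n) (k : ℕ) : Set (Set (V n)) :=
  {σ | σ ∈ F.cones ∧ dimCone σ = k}

/-- The ray generated by a vector. -/
def ray {n : ℕ} (v : V n) : Set (V n) := {x | ∃ t : ℝ, 0 ≤ t ∧ x = t • v}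

/-- A primitive lattice vector: integral, nonzero, and not a nontrivial
positive integer multiple of an integral vector. -/
def IsPrimitiveVec {n : ℕ} (v : V n) : Prop :=
  IsIntegralVec v ∧ v ≠ 0 ∧
    ∀ (w : V n) (k : ℕ), IsIntegralVec w → v = (k : ℝ) • w → k = 1

/-- `Σ(1)`, identified with the set of primitive generators of the rays of the fan. -/
def Fan.rayGens {n : ℕ} (F : Fan n) : Set (V n) :=
  { v | IsPrimitiveVec v ∧ ray v ∈ F.cones }

/-- `σ(1)`: the primitive generators of the 1-dimensional faces of the cone `σ`. -/
def coneRays {n : ℕ} (σ : Set (V n)) : Set (V n) :=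
  { v | IsPrimitiveVec v ∧ IsFaceOf (ray v) σ }

/-- `φ ∈ PL(Σ)`: `φ` is linear on each cone of the fan. -/
def IsPL {n : ℕ} (F : Fan n) (φ : V n → ℝ) : Prop :=
  ∀ σ ∈ F.cones, ∃ m : Module.Dual ℝ (V n), ∀ x ∈ σ, φ x = m x

/-- Convexity of a piecewise-linear function on the support of the fan. -/
def IsConvexPLF {n : ℕ} (F : Fan n) (φ : V n → ℝ) : Prop :=
  ∀ u ∈ F.support, ∀ v ∈ F.support, φ (u + v) ≤ φ u + φ v

/-- Strict convexity: strict inequality whenever `u, v` lie in no common cone. -/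
def IsStrictlyConvexPLF {n : ℕ} (F : Fan n) (φ : V n → ℝ) : Prop :=
  ∀ u ∈ F.support, ∀ v ∈ F.support,
    (¬ ∃ σ ∈ F.cones, u ∈ σ ∧ v ∈ σ) → φ (u + v) < φ u + φ v

/-- A fan is quasi-projective if it carries a strictly convex piecewise-linear function. -/
def Fan.QuasiProjective {n : ℕ} (F : Fan n) : Prop :=
  ∃ φ : V n → ℝ, IsPL F φ ∧ IsStrictlyConvexPLF F φ

/-- A fan is simplicial if each of its cones is generated by linearly independent vectors. -/
def Fan.Simplicial {n : ℕ} (F : Fan n) : Prop :=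
  ∀ σ ∈ F.cones, ∃ G : Finset (V n),
    LinearIndependent ℝ (fun g : {x // x ∈ G} => (g : V n)) ∧ σ = coneGen ↑G

/-- `F'` refines `F`: same support, and every cone of `F'` lies in a cone of `F`. -/
def Fan.Refines {n : ℕ} (F' F : Fan n) : Prop :=
  F'.support = F.support ∧ ∀ σ' ∈ F'.cones, ∃ σ ∈ F.cones, σ' ⊆ σ

/-- A primitive collection: a set of rays of the fan contained in no single cone
of the fan, every proper subset of which is contained in some cone. -/
def IsPrimColl {n : ℕ} (F : Fan n) (P : Finset (V n)) : Prop :=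
  ↑P ⊆ F.rayGens ∧ (∀ σ ∈ F.cones, ¬ (↑P ⊆ σ)) ∧
    ∀ Q : Finset (V n), Q ⊂ P → ∃ σ ∈ F.cones, ↑Q ⊆ σ

/-- The subspace `PL(Σ)` of piecewise-linear functions, as a submodule of functions. -/
def PLsub {n : ℕ} (F : Fan n) : Submodule ℝ (V n → ℝ) where
  carrier := {φ | IsPL F φ}
  add_mem' := by
    intro φ ψ hφ hψ σ hσ
    obtain ⟨m1, h1⟩ := hφ σ hσ
    obtain ⟨m2, h2⟩ := hψ σ hσ
    exact ⟨m1 + m2, fun x hx => by simp [Pi.add_apply, h1 x hx, h2 x hx]⟩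
  zero_mem' := by
    intro σ hσ
    exact ⟨0, fun x hx => rfl⟩
  smul_mem' := by
    intro c φ hφ σ hσ
    obtain ⟨m, h⟩ := hφ σ hσ
    exact ⟨c • m, fun x hx => by simp [Pi.smul_apply, h x hx]⟩

/-- Evaluation at a point, as an element of `PL(Σ)*`. -/
def evalPL {n : ℕ} (F : Fan n) (x : V n) : Module.Dual ℝ (PLsub F) where
  toFun φ := (φ : V n → ℝ) x
  map_add' φ ψ := rfl
  map_smul' c φ := rfl

/-- The cone `CPL(Σ)` of convex piecewise-linear functions, inside `PL(Σ)`. -/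
def CPLs {n : ℕ} (F : Fan n) : Set (PLsub F) :=
  {φ | IsConvexPLF F (φ : V n → ℝ)}

/-- The Mori cone `NE(Σ) ⊆ PL(Σ)*`: the dual cone of `CPL(Σ)`. -/
def NE {n : ℕ} (F : Fan n) : Set (Module.Dual ℝ (PLsub F)) :=
  {ℓ | ∀ φ ∈ CPLs F, 0 ≤ ℓ φ}

/-- An interior wall: an `(n-1)`-dimensional cone of the fan not contained in the
topological boundary of the support. -/
def Fan.IsInteriorWall {n : ℕ} (F : Fan n) (τ : Set (V n)) : Prop :=
  τ ∈ F.cones ∧ dimCone τ = n - 1 ∧ ¬ (τ ⊆ frontier F.support)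

/-- The data of a wall relation for an interior wall `τ = σ ∩ σ'`:
`n-1` linearly independent rays of `τ`, rays `ρn ∈ σ(1) ∖ τ(1)` and
`ρn' ∈ σ'(1) ∖ τ(1)`, and coefficients with `aₙ > 0` and
`a₁ρ₁ + ⋯ + aₙρₙ + ρₙ₊₁ = 0`. -/
structure WallRelData (n : ℕ) (τ σ σ' : Set (V n)) where
  ρ : Fin (n - 1) → V n
  ρn : V n
  ρn' : V n
  a : Fin (n - 1) → ℝ
  an : ℝ
  ρ_mem : ∀ i, ρ i ∈ coneRays τ
  ρ_indep : LinearIndependent ℝ ρ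
  ρn_mem : ρn ∈ coneRays σ \ coneRays τ
  ρn'_mem : ρn' ∈ coneRays σ' \ coneRays τ
  an_pos : 0 < an
  rel : (∑ i, a i • ρ i) + an • ρn + ρn' = 0

/-- The functional `l_τ` on functions associated to a wall relation. -/
def WallRelData.funct {n : ℕ} {τ σ σ' : Set (V n)} (w : WallRelData n τ σ σ')
    (φ : V n → ℝ) : ℝ :=
  (∑ i, w.a i * φ (w.ρ i)) + w.an * φ w.ρn + φ w.ρn'

/-- The functional `l_τ ∈ PL(Σ)*` associated to a wall relation. -/
def WallRelData.dual {n : ℕ} (F : Fan n) {τ σ σ' : Set (V n)}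
    (w : WallRelData n τ σ σ') : Module.Dual ℝ (PLsub F) :=
  (∑ i, w.a i • evalPL F (w.ρ i)) + w.an • evalPL F w.ρn + evalPL F w.ρn'

/-- `ℓ ∈ PL(Σ)*` is (a choice of) the wall-relation functional of some interior wall. -/
def IsWallFunctional {n : ℕ} (F : Fan n) (ℓ : Module.Dual ℝ (PLsub F)) : Prop :=
  ∃ (τ σ σ' : Set (V n)) (w : WallRelData n τ σ σ'),
    F.IsInteriorWall τ ∧ σ ∈ F.conesDim n ∧ σ' ∈ F.conesDim n ∧
      τ = σ ∩ σ' ∧ ℓ = w.dual F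

/-- `σ` is the minimal cone of the fan containing `x`. -/
def IsMinimalConeContaining {n : ℕ} (F : Fan n) (x : V n) (σ : Set (V n)) : Prop :=
  σ ∈ F.cones ∧ x ∈ σ ∧ ∀ σ' ∈ F.cones, x ∈ σ' → σ ⊆ σ'

/-- A primitive relation for the primitive collection `P`: a linearly independent
subset `S ⊆ σ(1)` of the minimal cone `σ` containing `∑_{ρ∈P} ρ` together with
positive coefficients `b` with `∑_{ρ∈P} ρ = ∑_{ρ∈S} b_ρ ρ`. -/
def IsPrimRel {n : ℕ} (F : Fan n) (P S : Finset (V n)) (b : V n → ℝ) : Prop :=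
  ∃ σ : Set (V n), IsMinimalConeContaining F (∑ ρ ∈ P, ρ) σ ∧
    ↑S ⊆ coneRays σ ∧
    LinearIndependent ℝ (fun s : {x // x ∈ S} => (s : V n)) ∧
    (∀ ρ ∈ S, 0 < b ρ) ∧ (∑ ρ ∈ P, ρ) = ∑ ρ ∈ S, b ρ • ρ

open scoped Classical in
/-- The vector `a_P ∈ ℝ^{Σ(1)}` associated to a primitive relation. -/
def primVec {n : ℕ} (P S : Finset (V n)) (b : V n → ℝ) : V n → ℝ := fun ρ =>
  if ρ ∈ P then (if ρ ∈ S then 1 - b ρ else 1)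
  else (if ρ ∈ S then -b ρ else 0)

/-- The functional `l_P ∈ PL(Σ)*` of a primitive collection:
`φ ↦ ∑_{ρ∈P} φ(ρ) − φ(∑_{ρ∈P} ρ)`. -/
def primDual {n : ℕ} (F : Fan n) (P : Finset (V n)) : Module.Dual ℝ (PLsub F) :=
  (∑ ρ ∈ P, evalPL F ρ) - evalPL F (∑ ρ ∈ P, ρ)

section Lemmas

variable {n : ℕ}

lemma mem_coneGen_self {S : Set (V n)} {g : V n} (hg : g ∈ S) : g ∈ coneGen S := by
  refine ⟨{g}, fun _ => 1, by simpa using hg, by simp, by simp⟩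

lemma zero_mem_coneGen (S : Set (V n)) : (0 : V n) ∈ coneGen S :=
  ⟨∅, fun _ => 0, by simp, by simp, by simp⟩

lemma add_mem_coneGen {S : Set (V n)} {x y : V n} (hx : x ∈ coneGen S)
    (hy : y ∈ coneGen S) : x + y ∈ coneGen S := by
  obtain ⟨t, c, htS, hc, rfl⟩ := hx
  obtain ⟨t', c', ht'S, hc', rfl⟩ := hy
  classical
  refine ⟨t ∪ t', fun g => (if g ∈ t then c g else 0) + (if g ∈ t' then c' g else 0),
    ?_, ?_, ?_⟩
  · intro g hg
    rcases Finset.mem_union.mp (by exact_mod_cast hg) with h | h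
    · exact htS h
    · exact ht'S h
  · intro g hg
    have h1 : (0:ℝ) ≤ if g ∈ t then c g else 0 := by
      by_cases h : g ∈ t <;> simp [h, hc g]
    have h2 : (0:ℝ) ≤ if g ∈ t' then c' g else 0 := by
      by_cases h : g ∈ t' <;> simp [h, hc' g]
    exact add_nonneg h1 h2
  · symm
    have e1 : ∑ g ∈ t ∪ t', (if g ∈ t then c g else 0) • g = ∑ g ∈ t, c g • g := by
      rw [← Finset.sum_subset Finset.subset_union_left]
      · exact Finset.sum_congr rfl fun g hg => by rw [if_pos hg]
      · intro g _ hg; rw [if_neg hg, zero_smul]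
    have e2 : ∑ g ∈ t ∪ t', (if g ∈ t' then c' g else 0) • g = ∑ g ∈ t', c' g • g := by
      rw [← Finset.sum_subset Finset.subset_union_right]
      · exact Finset.sum_congr rfl fun g hg => by rw [if_pos hg]
      · intro g _ hg; rw [if_neg hg, zero_smul]
    rw [← e1, ← e2, ← Finset.sum_add_distrib]
    exact Finset.sum_congr rfl fun g _ => by rw [add_smul]

lemma smul_mem_coneGen {S : Set (V n)} {x : V n} {r : ℝ} (hr : 0 ≤ r)
    (hx : x ∈ coneGen S) : r • x ∈ coneGen S := by
  obtain ⟨t, c, htS, hc, rfl⟩ := hx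
  refine ⟨t, fun g => r * c g, htS, fun g hg => mul_nonneg hr (hc g hg), ?_⟩
  rw [Finset.smul_sum]
  exact Finset.sum_congr rfl fun g _ => by rw [smul_smul]

lemma sum_mem_coneGen {S : Set (V n)} {ι : Type*} (t : Finset ι) (c : ι → ℝ)
    (p : ι → V n) (hc : ∀ i ∈ t, 0 ≤ c i) (hp : ∀ i ∈ t, p i ∈ coneGen S) :
    (∑ i ∈ t, c i • p i) ∈ coneGen S := by
  classical
  induction t using Finset.cons_induction with
  | empty => simpa using zero_mem_coneGen S
  | cons a t ha ih =>
    rw [Finset.sum_cons]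
    exact add_mem_coneGen
      (smul_mem_coneGen (hc a (Finset.mem_cons_self a t)) (hp a (Finset.mem_cons_self a t)))
      (ih (fun i hi => hc i (Finset.mem_cons_of_mem hi))
          (fun i hi => hp i (Finset.mem_cons_of_mem hi)))

lemma coneGen_subset {S T : Set (V n)} (h : S ⊆ coneGen T) : coneGen S ⊆ coneGen T := by
  rintro x ⟨t, c, htS, hc, rfl⟩
  exact sum_mem_coneGen t c id hc fun g hg => h (htS hg)

/-- A cone of a fan is closed under nonnegative combinations. -/
lemma Fan.cone_eq_coneGen {F : Fan n} {σ : Set (V n)} (hσ : σ ∈ F.cones) :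
    σ = coneGen σ := by
  obtain ⟨⟨G, _, rfl⟩, _⟩ := F.poly σ hσ
  exact le_antisymm (fun x hx => mem_coneGen_self hx)
    (coneGen_subset (fun g hg => hg))

lemma Fan.add_mem {F : Fan n} {σ : Set (V n)} (hσ : σ ∈ F.cones) {x y : V n}
    (hx : x ∈ σ) (hy : y ∈ σ) : x + y ∈ σ := by
  rw [F.cone_eq_coneGen hσ] at hx hy ⊢; exact add_mem_coneGen hx hy

lemma Fan.smul_mem {F : Fan n} {σ : Set (V n)} (hσ : σ ∈ F.cones) {x : V n} {r : ℝ}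
    (hr : 0 ≤ r) (hx : x ∈ σ) : r • x ∈ σ := by
  rw [F.cone_eq_coneGen hσ] at hx ⊢; exact smul_mem_coneGen hr hx

lemma Fan.sum_mem {F : Fan n} {σ : Set (V n)} (hσ : σ ∈ F.cones) {ι : Type*}
    (t : Finset ι) (c : ι → ℝ) (p : ι → V n) (hc : ∀ i ∈ t, 0 ≤ c i)
    (hp : ∀ i ∈ t, p i ∈ σ) : (∑ i ∈ t, c i • p i) ∈ σ := by
  rw [F.cone_eq_coneGen hσ]
  exact sum_mem_coneGen t c p hc fun i hi => mem_coneGen_self (hp i hi)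

lemma Fan.zero_mem {F : Fan n} {σ : Set (V n)} (hσ : σ ∈ F.cones) : (0 : V n) ∈ σ := by
  rw [F.cone_eq_coneGen hσ]; exact zero_mem_coneGen σ

lemma IsFaceOf.subset {τ σ : Set (V n)} (h : IsFaceOf τ σ) : τ ⊆ σ := by
  obtain ⟨m, _, rfl⟩ := h; exact Set.inter_subset_left

lemma IsFaceOf.refl (σ : Set (V n)) : IsFaceOf σ σ :=
  ⟨0, by simp, by simp⟩

lemma Fan.inter_mem {F : Fan n} {σ σ' : Set (V n)} (hσ : σ ∈ F.cones)
    (hσ' : σ' ∈ F.cones) : σ ∩ σ' ∈ F.cones :=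
  F.face_mem σ hσ _ ((F.inter_face σ hσ σ' hσ').1)

lemma mem_ray_self (v : V n) : v ∈ ray v := ⟨1, zero_le_one, (one_smul _ _).symm⟩

lemma coneRays_subset {σ : Set (V n)} {v : V n} (h : v ∈ coneRays σ) : v ∈ σ :=
  h.2.subset (mem_ray_self v)

lemma Fan.coneRays_subset_rayGens {F : Fan n} {σ : Set (V n)} (hσ : σ ∈ F.cones) :
    coneRays σ ⊆ F.rayGens := fun v hv => ⟨hv.1, F.face_mem σ hσ _ hv.2⟩

end Lemmas
section Lemmas2

variable {n : ℕ}

/-- Existence of a linear functional with prescribed values on a linearly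
independent finite set. -/
lemma exists_dual_prescribed {G : Finset (V n)}
    (hG : LinearIndependent ℝ (fun g : {x // x ∈ G} => (g : V n))) (f : V n → ℝ) :
    ∃ m : Module.Dual ℝ (V n), ∀ g ∈ G, m g = f g := by
  classical
  have hG' : LinearIndependent ℝ (fun x : ((G : Set (V n))) => (x : V n)) := by
    exact hG.comp (Equiv.subtypeEquivRight (fun x => (Finset.mem_coe).symm)).symm
      (Equiv.injective _)
  have hG'' : LinearIndependent ℝ (Subtype.val : ((G : Set (V n))) → V n) := hG'
  let b := Module.Basis.extend hG''
  refine ⟨b.constr ℝ (fun x => if (x : V n) ∈ G then f (x : V n) else 0), ?_⟩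
  intro g hg
  have hgs : g ∈ LinearIndepOn.extend (v := id) (s := (G : Set (V n))) hG'' (Set.subset_univ _) :=
    LinearIndepOn.subset_extend (v := id) (s := (G : Set (V n))) hG'' _ (by exact_mod_cast hg)
  have hb : b ⟨g, hgs⟩ = g := Module.Basis.extend_apply_self hG'' ⟨g, hgs⟩
  calc (b.constr ℝ (fun x => if (x : V n) ∈ G then f (x : V n) else 0)) g
      = (b.constr ℝ _) (b ⟨g, hgs⟩) := by rw [hb]
    _ = if g ∈ G then f g else 0 := Module.Basis.constr_basis _ _ _ _
    _ = f g := if_pos hg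

/-- Transitivity of faces, for cones of a fan. -/
lemma IsFaceOf.trans_fan {F : Fan n} {τ δ σ : Set (V n)} (h1 : IsFaceOf τ δ)
    (h2 : IsFaceOf δ σ) (hσ : σ ∈ F.cones) : IsFaceOf τ σ := by
  classical
  obtain ⟨⟨G, _, hGgen⟩, _⟩ := F.poly σ hσ
  obtain ⟨m₁, hm₁, hτ⟩ := h1
  obtain ⟨m₂, hm₂, hδ⟩ := h2
  obtain ⟨B, hB⟩ : ∃ B : ℝ, ∀ g ∈ G, m₂ g > 0 → -m₁ g / m₂ g ≤ B := by
    obtain ⟨B, hB⟩ := (G.finite_toSet.image fun g => -m₁ g / m₂ g).bddAbove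
    exact ⟨B, fun g hg _ => hB ⟨g, hg, rfl⟩⟩
  set N : ℝ := max B 0 + 1 with hN
  have hBN : B < N := by
    have := le_max_left B 0; rw [hN]; linarith
  have hGσ : ∀ g ∈ G, g ∈ σ := fun g hg => by
    rw [hGgen]; exact mem_coneGen_self (by exact_mod_cast hg)
  set M : Module.Dual ℝ (V n) := m₁ + N • m₂ with hM
  have hMg : ∀ x, M x = m₁ x + N * m₂ x := fun x => rfl
  have hNpos : ∀ g ∈ G, m₂ g > 0 → 0 < M g := by
    intro g hg h2g
    have h1 : -m₁ g / m₂ g < N := lt_of_le_of_lt (hB g hg h2g) hBN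
    have := (div_lt_iff₀ h2g).mp h1
    rw [hMg]; linarith
  have hMnn : ∀ g ∈ G, 0 ≤ M g := by
    intro g hg
    rcases (lt_or_eq_of_le (hm₂ g (hGσ g hg))) with h | h
    · exact le_of_lt (hNpos g hg h)
    · have hgδ : g ∈ δ := by rw [hδ]; exact ⟨hGσ g hg, h.symm⟩
      have h1 := hm₁ g hgδ
      rw [hMg, ← h, mul_zero, add_zero]; exact h1
  have hMrep : ∀ (t : Finset (V n)) (c : V n → ℝ),
      M (∑ g ∈ t, c g • g) = ∑ g ∈ t, c g * M g := by
    intro t c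
    rw [map_sum]
    exact Finset.sum_congr rfl fun g _ => by rw [map_smul]; rfl
  refine ⟨M, ?_, ?_⟩
  · intro x hx
    rw [hGgen] at hx
    obtain ⟨t, c, htG, hc, rfl⟩ := hx
    rw [hMrep]
    exact Finset.sum_nonneg fun g hg =>
      mul_nonneg (hc g hg) (hMnn g (by exact_mod_cast htG hg))
  · ext x
    constructor
    · intro hx
      have hxδ : x ∈ δ := (hτ ▸ hx).1
      have hxσ : x ∈ σ := (hδ ▸ hxδ).1
      have h2x : m₂ x = 0 := (hδ ▸ hxδ).2
      have h1x : m₁ x = 0 := (hτ ▸ hx).2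
      refine ⟨hxσ, ?_⟩
      show M x = 0
      rw [hMg, h1x, h2x, mul_zero, add_zero]
    · rintro ⟨hxσ, hxm⟩
      have hxm : M x = 0 := hxm
      have hxG := hxσ
      rw [hGgen] at hxG
      obtain ⟨t, c, htG, hc, hxe⟩ := hxG
      have hterm : ∀ g ∈ t, 0 ≤ c g * M g := fun g hg =>
        mul_nonneg (hc g hg) (hMnn g (by exact_mod_cast htG hg))
      have hsum : ∑ g ∈ t, c g * M g = 0 := by
        rw [← hMrep, ← hxe, hxm]
      have hzero : ∀ g ∈ t, c g * M g = 0 :=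
        (Finset.sum_eq_zero_iff_of_nonneg hterm).mp hsum
      have hgτ : ∀ g ∈ t, c g ≠ 0 → (m₁ g = 0 ∧ m₂ g = 0) := by
        intro g hg hcg
        have hgG : g ∈ G := by exact_mod_cast htG hg
        have h0 : M g = 0 := by
          rcases mul_eq_zero.mp (hzero g hg) with h | h
          · exact absurd h hcg
          · exact h
        have h2 : m₂ g = 0 := by
          rcases (lt_or_eq_of_le (hm₂ g (hGσ g hgG))) with h | h
          · exact absurd h0 (ne_of_gt (hNpos g hgG h))
          · exact h.symm
        have h1 : m₁ g = 0 := by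
          have := hMg g
          rw [h0, h2, mul_zero, add_zero] at this  -- 0 = m₁ g
          exact this.symm
        exact ⟨h1, h2⟩
      have hm1x : m₁ x = 0 := by
        rw [hxe, map_sum]
        apply Finset.sum_eq_zero
        intro g hg
        rcases eq_or_ne (c g) 0 with h | h
        · rw [h, zero_smul, map_zero]
        · rw [map_smul, (hgτ g hg h).1, smul_zero]
      have hm2x : m₂ x = 0 := by
        rw [hxe, map_sum]
        apply Finset.sum_eq_zero
        intro g hg
        rcases eq_or_ne (c g) 0 with h | h
        · rw [h, zero_smul, map_zero]
        · rw [map_smul, (hgτ g hg h).2, smul_zero]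
      rw [hτ]
      exact ⟨by rw [hδ]; exact ⟨hxσ, hm2x⟩, hm1x⟩

end Lemmas2
section Lemmas3

variable {n : ℕ}

lemma ray_smul {v : V n} {s : ℝ} (hs : 0 < s) : ray (s • v) = ray v := by
  ext x
  constructor
  · rintro ⟨t, ht, rfl⟩
    exact ⟨t * s, mul_nonneg ht (le_of_lt hs), by rw [smul_smul]⟩
  · rintro ⟨t, ht, rfl⟩
    exact ⟨t / s, div_nonneg ht (le_of_lt hs), by
      rw [smul_smul, div_mul_cancel₀ _ (ne_of_gt hs)]⟩

/-- Every nonzero integral vector is a positive multiple of a primitive vector. -/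
lemma exists_primitive_of_integral {v : V n} (hint : IsIntegralVec v) (hv : v ≠ 0) :
    ∃ (p : V n) (c : ℝ), IsPrimitiveVec p ∧ 0 < c ∧ v = c • p := by
  classical
  choose z hz using hint
  set d : ℕ := Finset.univ.gcd (fun i => (z i).natAbs) with hd
  have hzero : ∃ i, z i ≠ 0 := by
    by_contra h
    push_neg at h
    apply hv
    funext i
    rw [hz i, h i]
    simp
  have hd0 : d ≠ 0 := by
    intro h
    obtain ⟨i, hi⟩ := hzero
    have := Finset.gcd_eq_zero_iff.mp h i (Finset.mem_univ i)
    exact hi (Int.natAbs_eq_zero.mp this)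
  have hdvd : ∀ i, (d : ℤ) ∣ z i := by
    intro i
    have h1 : d ∣ (z i).natAbs := Finset.gcd_dvd (Finset.mem_univ i)
    exact dvd_trans (Int.natCast_dvd_natCast.mpr h1) (Int.natAbs_dvd.mpr dvd_rfl)
  choose w hw using hdvd
  set p : V n := fun i => ((w i : ℤ) : ℝ) with hp
  have hvdp : v = (d : ℝ) • p := by
    funext i
    rw [hz i, hw i]
    push_cast
    simp [hp]
  have hpint : IsIntegralVec p := fun i => ⟨w i, rfl⟩
  have hp0 : p ≠ 0 := by
    intro h
    apply hv
    rw [hvdp, h, smul_zero]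
  have hgcdw : Finset.univ.gcd (fun i => (w i).natAbs) = 1 := by
    set e := Finset.univ.gcd (fun i => (w i).natAbs) with he
    have h1 : ∀ i : Fin n, d * e ∣ (z i).natAbs := by
      intro i
      have h2 : e ∣ (w i).natAbs := Finset.gcd_dvd (Finset.mem_univ i)
      have h3 : (z i).natAbs = d * (w i).natAbs := by
        rw [hw i, Int.natAbs_mul, Int.natAbs_natCast]
      rw [h3]
      exact mul_dvd_mul_left d h2
    have h4 : d * e ∣ d := Finset.dvd_gcd fun i _ => h1 i
    have h5 : d * e ∣ d * 1 := by rwa [mul_one]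
    have h6 : e ∣ 1 := (mul_dvd_mul_iff_left hd0).mp h5
    exact Nat.dvd_one.mp h6
  refine ⟨p, d, ⟨hpint, hp0, ?_⟩, by positivity, hvdp⟩
  intro q k hq hpq
  choose y hy using hq
  have hwk : ∀ i, w i = (k : ℤ) * y i := by
    intro i
    have : ((w i : ℤ) : ℝ) = (k : ℝ) * ((y i : ℤ) : ℝ) := by
      have := congrFun hpq i
      rw [hp] at this
      simpa [hy i] using this
    exact_mod_cast this
  have hkdvd : ∀ i, k ∣ (w i).natAbs := by
    intro i
    rw [hwk i, Int.natAbs_mul, Int.natAbs_natCast]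
    exact Dvd.intro _ rfl
  have : k ∣ 1 := hgcdw ▸ Finset.dvd_gcd fun i _ => hkdvd i
  exact Nat.dvd_one.mp this

/-- Two primitive vectors generating the same ray are equal. -/
lemma primitive_unique {p q : V n} (hp : IsPrimitiveVec p) (hq : IsPrimitiveVec q)
    {t : ℝ} (ht : 0 < t) (hqt : q = t • p) : q = p := by
  classical
  obtain ⟨hpint, hp0, hpprim⟩ := hp
  obtain ⟨hqint, hq0, hqprim⟩ := hq
  choose zp hzp using hpint
  choose zq hzq using hqint
  obtain ⟨i₀, hi₀⟩ : ∃ i, p i ≠ 0 := by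
    by_contra h
    push_neg at h
    exact hp0 (funext h)
  have hcross : ∀ j, zp i₀ * zq j = zq i₀ * zp j := by
    intro j
    have h1 : p i₀ * q j = q i₀ * p j := by
      have hj : q j = t * p j := by rw [hqt]; rfl
      have hi : q i₀ = t * p i₀ := by rw [hqt]; rfl
      rw [hj, hi]; ring
    have : ((zp i₀ * zq j : ℤ) : ℝ) = ((zq i₀ * zp j : ℤ) : ℝ) := by
      push_cast
      rw [← hzp i₀, ← hzq j, ← hzq i₀, ← hzp j]
      exact h1
    exact_mod_cast this
  set A := (zp i₀).natAbs with hA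
  set Bn := (zq i₀).natAbs with hB
  have hA0 : A ≠ 0 := fun h => hi₀ (by rw [hzp i₀, Int.natAbs_eq_zero.mp h, Int.cast_zero])
  have hqi₀ : q i₀ ≠ 0 := by
    rw [hqt]
    show t * p i₀ ≠ 0
    exact mul_ne_zero (ne_of_gt ht) hi₀
  have hB0 : Bn ≠ 0 := fun h => hqi₀ (by rw [hzq i₀, Int.natAbs_eq_zero.mp h, Int.cast_zero])
  have habs : ∀ j, A * (zq j).natAbs = Bn * (zp j).natAbs := by
    intro j
    rw [hA, hB, ← Int.natAbs_mul, ← Int.natAbs_mul, hcross j]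
  set g := Nat.gcd A Bn with hg
  have hg0 : 0 < g := Nat.gcd_pos_of_pos_left _ (Nat.pos_of_ne_zero hA0)
  set A' := A / g with hA'
  set B' := Bn / g with hB'
  have hAg : A = g * A' := (Nat.mul_div_cancel' (Nat.gcd_dvd_left A Bn)).symm
  have hBg : Bn = g * B' := (Nat.mul_div_cancel' (Nat.gcd_dvd_right A Bn)).symm
  have hcop : Nat.Coprime A' B' := Nat.coprime_div_gcd_div_gcd hg0
  have habs' : ∀ j, A' * (zq j).natAbs = B' * (zp j).natAbs := by
    intro j
    apply Nat.eq_of_mul_eq_mul_left hg0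
    calc g * (A' * (zq j).natAbs) = (g * A') * (zq j).natAbs := by ring
      _ = A * (zq j).natAbs := by rw [← hAg]
      _ = Bn * (zp j).natAbs := habs j
      _ = g * (B' * (zp j).natAbs) := by rw [hBg]; ring
  have hA'0 : A' ≠ 0 := by
    intro h
    rw [h, mul_zero] at hAg
    exact hA0 hAg
  have hB'0 : B' ≠ 0 := by
    intro h
    rw [h, mul_zero] at hBg
    exact hB0 hBg
  -- A' divides all coordinates of p
  have hA'dvd : ∀ j, (A' : ℤ) ∣ zp j := by
    intro j
    have h1 : A' ∣ B' * (zp j).natAbs := ⟨(zq j).natAbs, (habs' j).symm⟩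
    have h2 : A' ∣ (zp j).natAbs := (Nat.Coprime.dvd_of_dvd_mul_left hcop) h1
    exact dvd_trans (Int.natCast_dvd_natCast.mpr h2) (Int.natAbs_dvd.mpr dvd_rfl)
  have hA'1 : A' = 1 := by
    choose y hy using hA'dvd
    apply hpprim (fun j => ((y j : ℤ) : ℝ)) A' (fun j => ⟨y j, rfl⟩)
    funext j
    simp only [Pi.smul_apply, smul_eq_mul]
    rw [hzp j, hy j]
    push_cast
    ring
  have hB'dvd : ∀ j, (B' : ℤ) ∣ zq j := by
    intro j
    have h1 : B' ∣ A' * (zq j).natAbs := ⟨(zp j).natAbs, (habs' j)⟩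
    have h2 : B' ∣ (zq j).natAbs :=
      (Nat.Coprime.dvd_of_dvd_mul_right hcop.symm) (by rwa [mul_comm] at h1)
    exact dvd_trans (Int.natCast_dvd_natCast.mpr h2) (Int.natAbs_dvd.mpr dvd_rfl)
  have hB'1 : B' = 1 := by
    choose y hy using hB'dvd
    apply hqprim (fun j => ((y j : ℤ) : ℝ)) B' (fun j => ⟨y j, rfl⟩)
    funext j
    simp only [Pi.smul_apply, smul_eq_mul]
    rw [hzq j, hy j]
    push_cast
    ring
  have hABeq : A = Bn := by rw [hAg, hBg, hA'1, hB'1]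
  have : zp i₀ = zq i₀ ∨ zp i₀ = -zq i₀ := Int.natAbs_eq_natAbs_iff.mp (by rw [← hA, ← hB, hABeq])
  have ht1 : t = 1 := by
    have hqp : q i₀ = t * p i₀ := by rw [hqt]; rfl
    rcases this with h | h
    · have heq : p i₀ = q i₀ := by rw [hzp i₀, hzq i₀, h]
      have h2 : t * p i₀ = 1 * p i₀ := by rw [← hqp, ← heq, one_mul]
      exact mul_right_cancel₀ hi₀ h2
    · have heq : p i₀ = -q i₀ := by rw [hzp i₀, hzq i₀, h]; push_cast; ring
      have h2 : q i₀ * (1 + t) = 0 := by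
        rw [heq] at hqp
        ring_nf
        ring_nf at hqp
        linarith
      rcases mul_eq_zero.mp h2 with h' | h'
      · exact absurd h' hqi₀
      · linarith
  rw [hqt, ht1, one_smul]

end Lemmas3
section Lemmas4

variable {n : ℕ}

lemma finset_indep_iff_set_indep (G : Finset (V n)) :
    LinearIndependent ℝ (fun g : {x // x ∈ G} => (g : V n)) ↔
      LinearIndependent ℝ (Subtype.val : ((G : Set (V n))) → V n) := by
  constructor
  · intro h
    exact h.comp (Equiv.subtypeEquivRight (fun x => (Finset.mem_coe).symm)).symm
      (Equiv.injective _)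
  · intro h
    exact h.comp (Equiv.subtypeEquivRight (fun x => (Finset.mem_coe))).symm
      (Equiv.injective _)

lemma span_coneGen (S : Set (V n)) :
    Submodule.span ℝ (coneGen S) = Submodule.span ℝ S := by
  apply le_antisymm
  · rw [Submodule.span_le]
    rintro x ⟨t, c, htS, _, rfl⟩
    exact Submodule.sum_mem _ fun g hg =>
      Submodule.smul_mem _ _ (Submodule.subset_span (htS hg))
  · exact Submodule.span_mono fun x hx => mem_coneGen_self hx

/-- In a linearly independent finset, distinct elements are not proportional. -/
lemma not_proportional_of_indep {G : Finset (V n)}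
    (hG : LinearIndependent ℝ (fun g : {x // x ∈ G} => (g : V n)))
    {h h' : V n} (hh : h ∈ G) (hh' : h' ∈ G) (hne : h ≠ h') {r : ℝ}
    (heq : h' = r • h) : False := by
  classical
  set c : V n → ℝ := fun x => if x = h' then 1 else if x = h then -r else 0 with hc
  have hsum : ∑ x : {x // x ∈ G}, c ↑x • (x : V n) = 0 := by
    rw [Finset.sum_coe_sort G (fun g => c g • g)]
    have hsub : ({h', h} : Finset (V n)) ⊆ G := by
      intro x hx
      rcases Finset.mem_insert.mp hx with rfl | hx
      · exact hh'
      · rw [Finset.mem_singleton.mp hx]; exact hh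
    rw [← Finset.sum_subset hsub]
    · rw [Finset.sum_pair hne.symm]
      have e1 : c h' = 1 := by simp [hc]
      have e2 : c h = -r := by simp [hc, hne]
      rw [e1, e2, heq]
      module
    · intro x _ hx
      have h1 : x ≠ h' := fun h => hx (by rw [h]; exact Finset.mem_insert_self _ _)
      have h2 : x ≠ h := fun h => hx (by rw [h]; exact Finset.mem_insert_of_mem (Finset.mem_singleton_self _))
      rw [hc]
      simp only [if_neg h1, if_neg h2, zero_smul]
  have := Fintype.linearIndependent_iff.mp hG (fun x => c ↑x) hsum ⟨h', hh'⟩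
  simp only [hc, if_pos rfl] at this
  exact one_ne_zero this

/-- For a simplicial fan, every cone is generated by its set of primitive rays,
which is finite and linearly independent. -/
lemma Fan.simplicial_rays {F : Fan n} (hsimp : F.Simplicial) {σ : Set (V n)}
    (hσ : σ ∈ F.cones) :
    ∃ R : Finset (V n), (↑R : Set (V n)) = coneRays σ ∧ σ = coneGen ↑R ∧
      LinearIndependent ℝ (fun r : {x // x ∈ R} => (r : V n)) := by
  classical
  obtain ⟨G, hGind, hGgen⟩ := hsimp σ hσ
  have hG0 : ∀ g ∈ G, g ≠ (0 : V n) := fun g hg => hGind.ne_zero ⟨g, hg⟩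
  have hGmem : ∀ g ∈ G, g ∈ σ := fun g hg => by
    rw [hGgen]; exact mem_coneGen_self (by exact_mod_cast hg)
  -- each generator spans a face
  have hface : ∀ g ∈ G, IsFaceOf (ray g) σ := by
    intro g hg
    obtain ⟨m, hm⟩ := exists_dual_prescribed hGind (fun x => if x = g then 0 else 1)
    refine ⟨m, ?_, ?_⟩
    · intro x hx
      rw [hGgen] at hx
      obtain ⟨t, c, htG, hc, rfl⟩ := hx
      rw [map_sum]
      apply Finset.sum_nonneg
      intro h hh
      rw [map_smul, smul_eq_mul]
      have hhG : h ∈ G := by exact_mod_cast htG hh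
      rw [hm h hhG]
      by_cases hhg : h = g
      · rw [if_pos hhg, mul_zero]
      · rw [if_neg hhg, mul_one]; exact hc h hh
    · ext x
      constructor
      · rintro ⟨t, ht, rfl⟩
        constructor
        · rw [hGgen]
          exact smul_mem_coneGen ht (mem_coneGen_self (by exact_mod_cast hg))
        · show m (t • g) = 0
          rw [map_smul, smul_eq_mul, hm g hg, if_pos rfl, mul_zero]
      · rintro ⟨hxσ, hxm⟩
        have hxm : m x = 0 := hxm
        have hx := hxσ
        rw [hGgen] at hx
        obtain ⟨t, c, htG, hc, rfl⟩ := hx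
        have hterm : ∀ h ∈ t, 0 ≤ c h * m h := by
          intro h hh
          have hhG : h ∈ G := by exact_mod_cast htG hh
          rw [hm h hhG]
          by_cases hhg : h = g
          · rw [if_pos hhg, mul_zero]
          · rw [if_neg hhg, mul_one]; exact hc h hh
        have hsum : ∑ h ∈ t, c h * m h = 0 := by
          rw [← hxm, map_sum]
          exact Finset.sum_congr rfl fun h _ => by rw [map_smul]; rfl
        have hzero := (Finset.sum_eq_zero_iff_of_nonneg hterm).mp hsum
        have hcz : ∀ h ∈ t, h ≠ g → c h = 0 := by
          intro h hh hhg
          have hhG : h ∈ G := by exact_mod_cast htG hh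
          have := hzero h hh
          rw [hm h hhG, if_neg hhg, mul_one] at this
          exact this
        have hxeq : ∑ h ∈ t, c h • h = (if g ∈ t then c g else 0) • g := by
          by_cases hgt : g ∈ t
          · rw [if_pos hgt]
            exact Finset.sum_eq_single_of_mem g hgt
              (fun h hh hhg => by rw [hcz h hh hhg, zero_smul])
          · rw [if_neg hgt]
            rw [zero_smul]
            apply Finset.sum_eq_zero
            intro h hh
            rw [hcz h hh (fun e => hgt (e ▸ hh)), zero_smul]
        rw [hxeq]
        refine ⟨_, ?_, rfl⟩
        by_cases hgt : g ∈ t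
        · rw [if_pos hgt]; exact hc g hgt
        · rw [if_neg hgt]
  -- primitive generator on each ray
  have hprim : ∀ g : V n, ∃ (p : V n) (s : ℝ),
      g ∈ G → (p ∈ coneRays σ ∧ 0 < s ∧ g = s • p) := by
    intro g
    by_cases hg : g ∈ G
    · have hrayc : ray g ∈ F.cones := F.face_mem σ hσ _ (hface g hg)
      obtain ⟨⟨G'', hG''int, hG''gen⟩, _⟩ := F.poly _ hrayc
      obtain ⟨w, hwG, hw0⟩ : ∃ w ∈ G'', w ≠ (0 : V n) := by
        by_contra h
        push_neg at h
        have : g ∈ coneGen (↑G'' : Set (V n)) := by rw [← hG''gen]; exact mem_ray_self g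
        obtain ⟨t, c, htG, hc, hge⟩ := this
        apply hG0 g hg
        rw [hge]
        apply Finset.sum_eq_zero
        intro x hx
        rw [h x (by exact_mod_cast htG hx), smul_zero]
      have hwray : w ∈ ray g := by
        rw [hG''gen]; exact mem_coneGen_self (by exact_mod_cast hwG)
      obtain ⟨t, ht0, hwt⟩ := hwray
      have ht : 0 < t := lt_of_le_of_ne ht0 (by rintro rfl; exact hw0 (by rw [hwt, zero_smul]))
      obtain ⟨p, cc, hp, hcc, hwcp⟩ :=
        exists_primitive_of_integral (hG''int w hwG) hw0
      refine ⟨p, cc / t, fun _ => ⟨⟨hp, ?_⟩, by positivity, ?_⟩⟩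
      · have : ray p = ray g := by
          have h1 : ray (t • g) = ray g := ray_smul ht
          have h2 : ray (cc • p) = ray p := ray_smul hcc
          rw [← h1, ← hwt, hwcp, h2]
        rw [this]
        exact hface g hg
      · have : g = t⁻¹ • (t • g) := by rw [smul_smul, inv_mul_cancel₀ (ne_of_gt ht), one_smul]
        rw [this, ← hwt, hwcp, smul_smul]
        congr 1
        field_simp
    · exact ⟨0, 1, fun h => absurd h hg⟩
  choose pf sf hpf using hprim
  set R : Finset (V n) := G.image pf with hR
  have hRsub : (↑R : Set (V n)) ⊆ coneRays σ := by
    intro x hx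
    obtain ⟨g, hg, rfl⟩ := Finset.mem_image.mp (by exact_mod_cast hx)
    exact (hpf g hg).1
  have hgenR : σ = coneGen (↑R : Set (V n)) := by
    apply le_antisymm
    · rw [hGgen]
      apply coneGen_subset
      intro g hg
      have hgG : g ∈ G := hg
      obtain ⟨h1, h2, h3⟩ := hpf g hgG
      rw [h3]
      apply smul_mem_coneGen (le_of_lt h2)
      exact mem_coneGen_self (by exact_mod_cast Finset.mem_image_of_mem pf hgG)
    · rw [hGgen]
      apply coneGen_subset
      intro x hx
      obtain ⟨g, hg, rfl⟩ := Finset.mem_image.mp (by exact_mod_cast hx)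
      obtain ⟨h1, h2, h3⟩ := hpf g hg
      have hpfg : pf g = (sf g)⁻¹ • g := by
        have hcg := congrArg (fun x => (sf g)⁻¹ • x) h3
        simp only [smul_smul, inv_mul_cancel₀ (ne_of_gt h2), one_smul] at hcg
        exact hcg.symm
      rw [hpfg]
      exact smul_mem_coneGen (le_of_lt (inv_pos.mpr h2))
        (mem_coneGen_self (by exact_mod_cast hg))
  have hRsup : coneRays σ ⊆ (↑R : Set (V n)) := by
    rintro w ⟨hwprim, hwface⟩
    obtain ⟨m, hm, hray⟩ := hwface
    have hwm : w ∈ σ ∩ {x | m x = 0} := hray ▸ mem_ray_self w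
    have hwσ : w ∈ σ := hwm.1
    have hw := hwσ
    rw [hGgen] at hw
    obtain ⟨t, c, htG, hc, hwe⟩ := hw
    have hterm : ∀ h ∈ t, 0 ≤ c h * m h := fun h hh =>
      mul_nonneg (hc h hh) (hm h (hGmem h (by exact_mod_cast htG hh)))
    have hmw : m w = 0 := hwm.2
    have hsum : ∑ h ∈ t, c h * m h = 0 := by
      rw [← hmw, hwe, map_sum]
      exact Finset.sum_congr rfl fun h _ => by rw [map_smul]; rfl
    have hzero := (Finset.sum_eq_zero_iff_of_nonneg hterm).mp hsum
    -- generators with nonzero coefficient lie on ray w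
    have honray : ∀ h ∈ t, c h ≠ 0 → ∃ s : ℝ, 0 < s ∧ h = s • w := by
      intro h hh hch
      have hmh : m h = 0 := by
        rcases mul_eq_zero.mp (hzero h hh) with h' | h'
        · exact absurd h' hch
        · exact h'
      have : h ∈ ray w := by
        rw [hray]
        exact ⟨hGmem h (by exact_mod_cast htG hh), hmh⟩
      obtain ⟨s, hs0, hse⟩ := this
      have hs : 0 < s := lt_of_le_of_ne hs0 (by
        rintro rfl
        exact hG0 h (by exact_mod_cast htG hh) (by rw [hse, zero_smul]))
      exact ⟨s, hs, hse⟩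
    obtain ⟨h₁, hh₁t, hch₁⟩ : ∃ h ∈ t, c h ≠ 0 := by
      by_contra hcon
      push_neg at hcon
      apply hwprim.2.1
      rw [hwe]
      apply Finset.sum_eq_zero
      intro h hh
      rw [hcon h hh, zero_smul]
    -- h₁ is the unique generator on the ray
    obtain ⟨s₁, hs₁, hse₁⟩ := honray h₁ hh₁t hch₁
    -- w = c h₁ • h₁ : all other coefficients are zero
    have huniq : ∀ h ∈ t, h ≠ h₁ → c h = 0 := by
      intro h hh hne
      by_contra hch
      obtain ⟨s₂, hs₂, hse₂⟩ := honray h hh hch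
      apply not_proportional_of_indep hGind
        (by exact_mod_cast htG hh₁t) (by exact_mod_cast htG hh) hne.symm
        (r := s₂ / s₁)
      rw [hse₂, hse₁, smul_smul]
      congr 1
      field_simp
    have hwh : w = (c h₁ * s₁) • w := by
      conv_lhs => rw [hwe]
      rw [Finset.sum_eq_single h₁]
      · rw [hse₁, smul_smul]
      · intro h hh hne
        rw [huniq h hh hne, zero_smul]
      · intro h; exact absurd hh₁t h
    -- so pf h₁ and w are primitive on the same ray
    have hh₁G : h₁ ∈ G := by exact_mod_cast htG hh₁t
    obtain ⟨hpc, hsf, hge⟩ := hpf h₁ hh₁G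
    -- h₁ = s₁ • w and h₁ = sf h₁ • pf h₁ ⟹ w = (sf h₁ / s₁) • pf h₁
    have hwp : w = (sf h₁ / s₁) • pf h₁ := by
      have : s₁ • w = sf h₁ • pf h₁ := by rw [← hse₁]; exact hge
      have h2 : w = s₁⁻¹ • (s₁ • w) := by
        rw [smul_smul, inv_mul_cancel₀ (ne_of_gt hs₁), one_smul]
      rw [h2, this, smul_smul]
      congr 1
      field_simp
    have : w = pf h₁ := primitive_unique hpc.1 hwprim (div_pos hsf hs₁) hwp
    rw [this]
    exact_mod_cast Finset.mem_image_of_mem pf hh₁G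
  have hReq : (↑R : Set (V n)) = coneRays σ := le_antisymm hRsub hRsup
  refine ⟨R, hReq, hgenR, ?_⟩
  -- linear independence via cardinality
  have hpinj : Set.InjOn pf ↑G := by
    intro g hg g' hg' he
    obtain ⟨_, hs, hge⟩ := hpf g hg
    obtain ⟨_, hs', hge'⟩ := hpf g' hg'
    by_contra hne
    have hpfg : pf g = (sf g)⁻¹ • g := by
      have hcg := congrArg (fun x => (sf g)⁻¹ • x) hge
      simp only [smul_smul, inv_mul_cancel₀ (ne_of_gt hs), one_smul] at hcg
      exact hcg.symm
    refine not_proportional_of_indep hGind hg hg' hne (r := sf g' / sf g) ?_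
    calc g' = sf g' • pf g' := hge'
      _ = sf g' • pf g := by rw [← he]
      _ = (sf g' / sf g) • g := by
          rw [hpfg, smul_smul, ← div_eq_mul_inv]
  have hcard : R.card = G.card := Finset.card_image_of_injOn hpinj
  have hspanR : Submodule.span ℝ (↑R : Set (V n)) = Submodule.span ℝ (↑G : Set (V n)) := by
    rw [← span_coneGen (↑R : Set (V n)), ← hgenR, hGgen, span_coneGen]
  rw [linearIndependent_iff_card_eq_finrank_span]
  have h1 : Fintype.card {x // x ∈ R} = R.card := Fintype.card_coe R
  have h2 : Set.range (fun r : {x // x ∈ R} => (r : V n)) = (↑R : Set (V n)) :=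
    Subtype.range_coe
  rw [h1, h2]
  show R.card = Module.finrank ℝ (Submodule.span ℝ (↑R : Set (V n)))
  rw [hspanR, finrank_span_finset_eq_card ((finset_indep_iff_set_indep G).mp hGind), hcard]

/-- The primitive rays of the ray on a primitive vector. -/
lemma coneRays_ray_self {p : V n} (hp : IsPrimitiveVec p) :
    coneRays (ray p) = {p} := by
  ext w
  constructor
  · rintro ⟨hwprim, hwface⟩
    have hw : w ∈ ray p := hwface.subset (mem_ray_self w)
    obtain ⟨t, ht0, hwt⟩ := hw
    have ht : 0 < t := lt_of_le_of_ne ht0 (by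
      rintro rfl
      exact hwprim.2.1 (by rw [hwt, zero_smul]))
    exact primitive_unique hp hwprim ht hwt
  · rintro rfl
    exact ⟨hp, IsFaceOf.refl _⟩

end Lemmas4
section Lemmas5

variable {n : ℕ}

lemma Fan.mem_support_iff {F : Fan n} {x : V n} :
    x ∈ F.support ↔ ∃ σ ∈ F.cones, x ∈ σ := by
  simp [Fan.support]

/-- The "hat" piecewise linear function at a ray of a simplicial fan. -/
lemma Fan.exists_hat {F : Fan n} (hsimp : F.Simplicial) {v₀ : V n}
    (hv₀ : v₀ ∈ F.rayGens) :
    ∃ φ : V n → ℝ, IsPL F φ ∧ φ v₀ = 1 ∧ (∀ w ∈ F.rayGens, w ≠ v₀ → φ w = 0) ∧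
      ∀ x ∈ F.support, 0 ≤ φ x := by
  classical
  have hms : ∀ σ : Set (V n), ∃ m : Module.Dual ℝ (V n),
      σ ∈ F.cones → ∀ r ∈ coneRays σ, m r = if r = v₀ then 1 else 0 := by
    intro σ
    by_cases hσ : σ ∈ F.cones
    · obtain ⟨R, hReq, _, hRind⟩ := Fan.simplicial_rays hsimp hσ
      obtain ⟨m, hm⟩ := exists_dual_prescribed hRind (fun x => if x = v₀ then 1 else 0)
      exact ⟨m, fun _ r hr => hm r (by rw [← Finset.mem_coe, hReq]; exact hr)⟩
    · exact ⟨0, fun h => absurd h hσ⟩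
  choose mf hmf using hms
  -- compatibility on intersections
  have hcompat : ∀ σ ∈ F.cones, ∀ γ ∈ F.cones, ∀ x ∈ σ ∩ γ, mf σ x = mf γ x := by
    intro σ hσ γ hγ x hx
    set δ := σ ∩ γ with hδ
    have hδc : δ ∈ F.cones := F.inter_mem hσ hγ
    have hδσ : IsFaceOf δ σ := (F.inter_face σ hσ γ hγ).1
    have hδγ : IsFaceOf δ γ := (F.inter_face σ hσ γ hγ).2
    obtain ⟨Rδ, hRδeq, hRδgen, _⟩ := Fan.simplicial_rays hsimp hδc
    have hsubσ : ∀ r ∈ Rδ, r ∈ coneRays σ := by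
      intro r hr
      have hr' : r ∈ coneRays δ := by rw [← hRδeq]; exact_mod_cast hr
      exact ⟨hr'.1, hr'.2.trans_fan hδσ hσ⟩
    have hsubγ : ∀ r ∈ Rδ, r ∈ coneRays γ := by
      intro r hr
      have hr' : r ∈ coneRays δ := by rw [← hRδeq]; exact_mod_cast hr
      exact ⟨hr'.1, hr'.2.trans_fan hδγ hγ⟩
    have hxδ : x ∈ coneGen (↑Rδ : Set (V n)) := by rw [← hRδgen]; exact hx
    obtain ⟨t, c, htR, hc, rfl⟩ := hxδ
    rw [map_sum, map_sum]
    apply Finset.sum_congr rfl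
    intro r hr
    have hrR : r ∈ Rδ := by exact_mod_cast htR hr
    rw [map_smul, map_smul, hmf σ hσ r (hsubσ r hrR), hmf γ hγ r (hsubγ r hrR)]
  set φ : V n → ℝ := fun x =>
    if h : ∃ σ ∈ F.cones, x ∈ σ then mf h.choose x else 0 with hφ
  have hφcone : ∀ σ ∈ F.cones, ∀ x ∈ σ, φ x = mf σ x := by
    intro σ hσ x hx
    have hex : ∃ σ ∈ F.cones, x ∈ σ := ⟨σ, hσ, hx⟩
    rw [hφ]
    simp only [dif_pos hex]
    exact hcompat hex.choose hex.choose_spec.1 σ hσ x ⟨hex.choose_spec.2, hx⟩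
  have hφnn : ∀ σ ∈ F.cones, ∀ x ∈ σ, 0 ≤ φ x := by
    intro σ hσ x hx
    rw [hφcone σ hσ x hx]
    obtain ⟨R, hReq, hRgen, _⟩ := Fan.simplicial_rays hsimp hσ
    have hx' : x ∈ coneGen (↑R : Set (V n)) := by rw [← hRgen]; exact hx
    obtain ⟨t, c, htR, hc, rfl⟩ := hx'
    rw [map_sum]
    apply Finset.sum_nonneg
    intro r hr
    have hrR : r ∈ coneRays σ := by
      rw [← hReq]; exact_mod_cast htR hr
    rw [map_smul, smul_eq_mul, hmf σ hσ r hrR]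
    by_cases h : r = v₀
    · rw [if_pos h, mul_one]; exact hc r hr
    · rw [if_neg h, mul_zero]
  have hraymem : ∀ w ∈ F.rayGens, φ w = if w = v₀ then 1 else 0 := by
    rintro w ⟨hwprim, hwc⟩
    have h1 : w ∈ ray w := mem_ray_self w
    rw [hφcone (ray w) hwc w h1]
    have : w ∈ coneRays (ray w) := by
      rw [coneRays_ray_self hwprim]; rfl
    exact hmf (ray w) hwc w this
  refine ⟨φ, ?_, ?_, ?_, ?_⟩
  · intro σ hσ
    exact ⟨mf σ, fun x hx => hφcone σ hσ x hx⟩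
  · rw [hraymem v₀ hv₀, if_pos rfl]
  · intro w hw hwne
    rw [hraymem w hw, if_neg hwne]
  · intro x hx
    obtain ⟨σ, hσ, hxσ⟩ := Fan.mem_support_iff.mp hx
    exact hφnn σ hσ x hxσ

end Lemmas5
section Lemmas6

variable {n : ℕ}

lemma Fan.sum_mem_plain {F : Fan n} {σ : Set (V n)} (hσ : σ ∈ F.cones) {ι : Type*}
    (t : Finset ι) (p : ι → V n) (hp : ∀ i ∈ t, p i ∈ σ) : (∑ i ∈ t, p i) ∈ σ := by
  have := F.sum_mem hσ t (fun _ => (1:ℝ)) p (fun _ _ => zero_le_one) hp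
  simpa using this

lemma Fan.support_smul_mem {F : Fan n} {x : V n} (hx : x ∈ F.support) {t : ℝ}
    (ht : 0 ≤ t) : t • x ∈ F.support := by
  obtain ⟨σ, hσ, hxσ⟩ := Fan.mem_support_iff.mp hx
  exact Fan.mem_support_iff.mpr ⟨σ, hσ, F.smul_mem hσ ht hxσ⟩

lemma Fan.support_add_mem {F : Fan n} (hconv : Convex ℝ F.support) {x y : V n}
    (hx : x ∈ F.support) (hy : y ∈ F.support) : x + y ∈ F.support := by
  have hz : (1/2 : ℝ) • x + (1/2 : ℝ) • y ∈ F.support :=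
    hconv hx hy (by norm_num) (by norm_num) (by norm_num)
  have : x + y = (2:ℝ) • ((1/2 : ℝ) • x + (1/2 : ℝ) • y) := by
    rw [smul_add, smul_smul, smul_smul]
    norm_num
  rw [this]
  exact Fan.support_smul_mem hz (by norm_num)

lemma Fan.support_zero_mem {F : Fan n} (hne : F.cones.Nonempty) :
    (0 : V n) ∈ F.support := by
  obtain ⟨σ, hσ⟩ := hne
  exact Fan.mem_support_iff.mpr ⟨σ, hσ, F.zero_mem hσ⟩

lemma Fan.support_sum_mem {F : Fan n} (hconv : Convex ℝ F.support)
    (hne : F.cones.Nonempty) {ι : Type*} (t : Finset ι) (p : ι → V n)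
    (hp : ∀ i ∈ t, p i ∈ F.support) : (∑ i ∈ t, p i) ∈ F.support := by
  classical
  induction t using Finset.cons_induction with
  | empty => simpa using Fan.support_zero_mem hne
  | cons a t ha ih =>
    rw [Finset.sum_cons]
    exact Fan.support_add_mem hconv (hp a (Finset.mem_cons_self a t))
      (ih fun i hi => hp i (Finset.mem_cons_of_mem hi))

lemma IsPL.homog {F : Fan n} {φ : V n → ℝ} (hφ : IsPL F φ) {x : V n}
    (hx : x ∈ F.support) {t : ℝ} (ht : 0 ≤ t) : φ (t • x) = t * φ x := by
  obtain ⟨σ, hσ, hxσ⟩ := Fan.mem_support_iff.mp hx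
  obtain ⟨m, hm⟩ := hφ σ hσ
  rw [hm x hxσ, hm (t • x) (F.smul_mem hσ ht hxσ), map_smul, smul_eq_mul]

lemma IsPL.zero {F : Fan n} {φ : V n → ℝ} (hφ : IsPL F φ) (hne : F.cones.Nonempty) :
    φ 0 = 0 := by
  obtain ⟨σ, hσ⟩ := hne
  obtain ⟨m, hm⟩ := hφ σ hσ
  rw [hm 0 (F.zero_mem hσ), map_zero]

lemma IsStrictlyConvexPLF.convex {F : Fan n} {φ : V n → ℝ} (hφ : IsPL F φ)
    (hs : IsStrictlyConvexPLF F φ) : IsConvexPLF F φ := by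
  intro u hu v hv
  by_cases h : ∃ σ ∈ F.cones, u ∈ σ ∧ v ∈ σ
  · obtain ⟨σ, hσ, huσ, hvσ⟩ := h
    obtain ⟨m, hm⟩ := hφ σ hσ
    rw [hm u huσ, hm v hvσ, hm (u + v) (F.add_mem hσ huσ hvσ), map_add]
  · exact le_of_lt (hs u hu v hv h)

lemma IsPL.sublinear {F : Fan n} {φ : V n → ℝ} (hφ : IsPL F φ)
    (hcf : IsConvexPLF F φ) (hconv : Convex ℝ F.support) (hne : F.cones.Nonempty)
    {ι : Type*} (t : Finset ι) (c : ι → ℝ) (p : ι → V n)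
    (hc : ∀ i ∈ t, 0 ≤ c i) (hp : ∀ i ∈ t, p i ∈ F.support) :
    φ (∑ i ∈ t, c i • p i) ≤ ∑ i ∈ t, c i * φ (p i) := by
  classical
  induction t using Finset.cons_induction with
  | empty => simp [hφ.zero hne]
  | cons a t ha ih =>
    rw [Finset.sum_cons, Finset.sum_cons]
    have h1 : φ (c a • p a + ∑ i ∈ t, c i • p i) ≤
        φ (c a • p a) + φ (∑ i ∈ t, c i • p i) := by
      apply hcf
      · exact Fan.support_smul_mem (hp a (Finset.mem_cons_self a t))
          (hc a (Finset.mem_cons_self a t))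
      · exact Fan.support_sum_mem hconv hne t _ fun i hi =>
          Fan.support_smul_mem (hp i (Finset.mem_cons_of_mem hi))
            (hc i (Finset.mem_cons_of_mem hi))
    have h2 : φ (c a • p a) = c a * φ (p a) :=
      hφ.homog (hp a (Finset.mem_cons_self a t)) (hc a (Finset.mem_cons_self a t))
    have h3 := ih (fun i hi => hc i (Finset.mem_cons_of_mem hi))
      (fun i hi => hp i (Finset.mem_cons_of_mem hi))
    calc φ (c a • p a + ∑ i ∈ t, c i • p i)
        ≤ φ (c a • p a) + φ (∑ i ∈ t, c i • p i) := h1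
      _ ≤ c a * φ (p a) + ∑ i ∈ t, c i * φ (p i) := by rw [h2]; linarith

lemma IsPL.sublinear_plain {F : Fan n} {φ : V n → ℝ} (hφ : IsPL F φ)
    (hcf : IsConvexPLF F φ) (hconv : Convex ℝ F.support) (hne : F.cones.Nonempty)
    {ι : Type*} (t : Finset ι) (p : ι → V n) (hp : ∀ i ∈ t, p i ∈ F.support) :
    φ (∑ i ∈ t, p i) ≤ ∑ i ∈ t, φ (p i) := by
  have := hφ.sublinear hcf hconv hne t (fun _ => (1:ℝ)) p (fun _ _ => zero_le_one) hp
  simpa using this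

/-- If a strictly convex PL function is additive on a family of points of the
support, then the points lie in a common cone. -/
lemma IsStrictlyConvexPLF.common_cone {F : Fan n} {φ : V n → ℝ} (hφ : IsPL F φ)
    (hs : IsStrictlyConvexPLF F φ) (hconv : Convex ℝ F.support)
    (hne : F.cones.Nonempty) {ι : Type*} (t : Finset ι) (p : ι → V n)
    (hp : ∀ i ∈ t, p i ∈ F.support)
    (heq : φ (∑ i ∈ t, p i) = ∑ i ∈ t, φ (p i)) :
    ∃ σ ∈ F.cones, ∀ i ∈ t, p i ∈ σ := by
  classical
  have hcf : IsConvexPLF F φ := hs.convex hφ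
  induction t using Finset.cons_induction with
  | empty =>
    obtain ⟨σ, hσ⟩ := hne
    exact ⟨σ, hσ, by simp⟩
  | cons a t ha ih =>
    rw [Finset.sum_cons, Finset.sum_cons] at heq
    set S := ∑ i ∈ t, p i with hS
    have hpa : p a ∈ F.support := hp a (Finset.mem_cons_self a t)
    have hpt : ∀ i ∈ t, p i ∈ F.support := fun i hi => hp i (Finset.mem_cons_of_mem hi)
    have hSsup : S ∈ F.support := Fan.support_sum_mem hconv hne t p hpt
    have h1 : φ (p a + S) ≤ φ (p a) + φ S := hcf (p a) hpa S hSsup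
    have h2 : φ S ≤ ∑ i ∈ t, φ (p i) := hφ.sublinear_plain hcf hconv hne t p hpt
    have hSeq : φ S = ∑ i ∈ t, φ (p i) := by linarith
    have haSeq : φ (p a + S) = φ (p a) + φ S := by linarith
    obtain ⟨σ', hσ', hσ'mem⟩ := ih hpt hSeq
    have hδ : ∃ δ ∈ F.cones, p a ∈ δ ∧ S ∈ δ := by
      by_contra h
      exact absurd haSeq (ne_of_lt (hs (p a) hpa S hSsup h))
    obtain ⟨δ, hδc, hpaδ, hSδ⟩ := hδ
    -- merge: all p i lie in δ via the face σ' ∩ δ of σ'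
    obtain ⟨m, hm, hfe⟩ := (F.inter_face σ' hσ' δ hδc).1
    have hSσ' : S ∈ σ' := Fan.sum_mem_plain hσ' t p hσ'mem
    have hSε : S ∈ σ' ∩ δ := ⟨hSσ', hSδ⟩
    have hmS : m S = 0 := by
      have := hfe ▸ hSε
      exact this.2
    have hmsum : ∑ i ∈ t, m (p i) = 0 := by rw [← map_sum]; exact hmS
    have hmnn : ∀ i ∈ t, 0 ≤ m (p i) := fun i hi => hm (p i) (hσ'mem i hi)
    have hmz : ∀ i ∈ t, m (p i) = 0 :=
      (Finset.sum_eq_zero_iff_of_nonneg hmnn).mp hmsum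
    refine ⟨δ, hδc, ?_⟩
    intro i hi
    rcases Finset.mem_cons.mp hi with rfl | hi'
    · exact hpaδ
    · have : p i ∈ σ' ∩ δ := by
        rw [hfe]
        exact ⟨hσ'mem i hi', hmz i hi'⟩
      exact this.2

lemma IsStrictlyConvexPLF.strict_sublinear {F : Fan n} {φ : V n → ℝ} (hφ : IsPL F φ)
    (hs : IsStrictlyConvexPLF F φ) (hconv : Convex ℝ F.support)
    (hne : F.cones.Nonempty) {ι : Type*} (t : Finset ι) (p : ι → V n)
    (hp : ∀ i ∈ t, p i ∈ F.support)
    (hnc : ¬ ∃ σ ∈ F.cones, ∀ i ∈ t, p i ∈ σ) :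
    φ (∑ i ∈ t, p i) < ∑ i ∈ t, φ (p i) := by
  rcases lt_or_eq_of_le (hφ.sublinear_plain (hs.convex hφ) hconv hne t p hp) with h | h
  · exact h
  · exact absurd (hs.common_cone hφ hconv hne t p hp h) hnc

end Lemmas6
section Helpers

variable {n : ℕ}

lemma PLsub.isPL {F : Fan n} (φ : PLsub F) : IsPL F (φ : V n → ℝ) := φ.2

lemma evalPL_apply {F : Fan n} (x : V n) (φ : PLsub F) :
    evalPL F x φ = (φ : V n → ℝ) x := rfl

lemma sum_smul_evalPL_apply {F : Fan n} {ι : Type*} (s : Finset ι) (c : ι → ℝ)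
    (x : ι → V n) (φ : PLsub F) :
    (∑ i ∈ s, c i • evalPL F (x i)) φ = ∑ i ∈ s, c i * (φ : V n → ℝ) (x i) := by
  rw [LinearMap.sum_apply]
  exact Finset.sum_congr rfl fun i _ => by
    rw [LinearMap.smul_apply, evalPL_apply, smul_eq_mul]

lemma sum_evalPL_apply {F : Fan n} {ι : Type*} (s : Finset ι)
    (x : ι → V n) (φ : PLsub F) :
    (∑ i ∈ s, evalPL F (x i)) φ = ∑ i ∈ s, (φ : V n → ℝ) (x i) := by
  rw [LinearMap.sum_apply]
  exact Finset.sum_congr rfl fun i _ => rfl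

/-- A PL function is linear on each cone. -/
lemma IsPL.linear_on_cone {F : Fan n} {φ : V n → ℝ} (hφ : IsPL F φ)
    {σ : Set (V n)} (hσ : σ ∈ F.cones) {ι : Type*} (s : Finset ι) (c : ι → ℝ)
    (p : ι → V n) (hc : ∀ i ∈ s, 0 ≤ c i) (hp : ∀ i ∈ s, p i ∈ σ) :
    φ (∑ i ∈ s, c i • p i) = ∑ i ∈ s, c i * φ (p i) := by
  obtain ⟨m, hm⟩ := hφ σ hσ
  rw [hm _ (F.sum_mem hσ s c p hc hp), map_sum]
  exact Finset.sum_congr rfl fun i hi => by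
    rw [map_smul, smul_eq_mul, hm _ (hp i hi)]

lemma IsPL.linear_on_cone_plain {F : Fan n} {φ : V n → ℝ} (hφ : IsPL F φ)
    {σ : Set (V n)} (hσ : σ ∈ F.cones) {ι : Type*} (s : Finset ι)
    (p : ι → V n) (hp : ∀ i ∈ s, p i ∈ σ) :
    φ (∑ i ∈ s, p i) = ∑ i ∈ s, φ (p i) := by
  have := hφ.linear_on_cone hσ s (fun _ => (1:ℝ)) p (fun _ _ => zero_le_one) hp
  simpa using this

end Helpers
set_option maxHeartbeats 2000000
/-- **Extremal walls give primitive collections.** Let `Σ` be a simplicial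
quasi-projective fan in `ℝ^n` with convex support of dimension `n`, let `τ` be
an interior wall with `τ(1) = {ρ₁,…,ρ_{n−1}}` whose adjacent `n`-dimensional
cones are generated by `τ(1) ∪ {ρₙ}` and `τ(1) ∪ {ρₙ₊₁}`, and let
`∑ aᵢρᵢ = 0` with `aₙ > 0`, `aₙ₊₁ = 1` be its wall relation.  If the associated
functional `l_τ = ∑ aᵢ·eval_{ρᵢ}` spans an extremal ray of the Mori cone
`NE(Σ)`, then `P = {ρᵢ : aᵢ > 0}` is a primitive collection for `Σ`, and any
primitive relation vector `a_P` of `P` equals `a_τ` up to a positive constant.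
(Here indices `0,…,n-2` of `Fin (n+1)` correspond to `ρ₁,…,ρ_{n−1}`, index
`n-1` to `ρₙ` and index `n` to `ρₙ₊₁`.) -/
theorem extremal_wall_primitive_collection {n : ℕ} (F : Fan n)
    (hsimp : F.Simplicial) (hqp : F.QuasiProjective)
    (hconv : Convex ℝ F.support) (hdim : dimCone F.support = n)
    (τ σ σ' : Set (V n)) (hτ : F.IsInteriorWall τ)
    (hσ : σ ∈ F.conesDim n) (hσ' : σ' ∈ F.conesDim n) (hw : τ = σ ∩ σ')
    (ρ : Fin (n + 1) → V n) (a : Fin (n + 1) → ℝ)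
    (hinj : Function.Injective ρ)
    (hτ1 : coneRays τ = ρ '' {i | (i : ℕ) < n - 1})
    (hσ1 : coneRays σ = ρ '' {i | (i : ℕ) < n - 1} ∪ {ρ ⟨n - 1, by omega⟩})
    (hσ'1 : coneRays σ' = ρ '' {i | (i : ℕ) < n - 1} ∪ {ρ ⟨n, by omega⟩})
    (hσgen : σ = coneGen (coneRays σ)) (hσ'gen : σ' = coneGen (coneRays σ'))
    (hrel : ∑ i, a i • ρ i = 0)
    (han : 0 < a ⟨n - 1, by omega⟩) (han1 : a ⟨n, by omega⟩ = 1)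
    (hne : (∑ i, a i • evalPL F (ρ i)) ∈ NE F)
    (hnz : (∑ i, a i • evalPL F (ρ i)) ≠ 0)
    (hext : ∀ x ∈ NE F, ∀ y ∈ NE F,
      (∑ i, a i • evalPL F (ρ i)) = x + y →
        (∃ c : ℝ, 0 ≤ c ∧ x = c • (∑ i, a i • evalPL F (ρ i))) ∧
        (∃ c : ℝ, 0 ≤ c ∧ y = c • (∑ i, a i • evalPL F (ρ i)))) :
    ∀ P : Finset (V n), ↑P = ρ '' {i | 0 < a i} →
      IsPrimColl F P ∧
      ∀ (S : Finset (V n)) (b : V n → ℝ), IsPrimRel F P S b →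
        ∃ c : ℝ, 0 < c ∧
          primVec P S b = c • (fun v : V n => ∑ i, if v = ρ i then a i else 0) := by
  classical
  intro P hP
  -- dispose of the degenerate case n = 0
  rcases Nat.eq_zero_or_pos n with hn0 | hn
  · exfalso
    apply hnz
    subst hn0
    apply LinearMap.ext
    intro φ
    have h0 : ∀ i : Fin 1, ρ i = 0 := fun i => funext fun j => j.elim0
    have hφ0 : (φ : V 0 → ℝ) 0 = 0 := IsPL.zero (PLsub.isPL φ) ⟨τ, hτ.1⟩
    rw [LinearMap.sum_apply, LinearMap.zero_apply]
    apply Finset.sum_eq_zero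
    intro i _
    rw [LinearMap.smul_apply, evalPL_apply, h0 i, hφ0, smul_zero]
  -- now n ≥ 1
  have hτc : τ ∈ F.cones := hτ.1
  have hσc : σ ∈ F.cones := hσ.1
  have hσ'c : σ' ∈ F.cones := hσ'.1
  have hconesne : F.cones.Nonempty := ⟨τ, hτc⟩
  set iN : Fin (n + 1) := ⟨n - 1, by omega⟩ with hiN
  set iN1 : Fin (n + 1) := ⟨n, by omega⟩ with hiN1
  have hiNne : iN ≠ iN1 := by
    simp only [hiN, hiN1, Fin.mk.injEq, ne_eq]
    omega
  -- ray membership facts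
  have hρσ : ∀ i : Fin (n + 1), i ≠ iN1 → ρ i ∈ coneRays σ := by
    intro i hi
    rw [hσ1]
    rcases Nat.lt_or_ge (i : ℕ) (n - 1) with h | h
    · exact Or.inl ⟨i, h, rfl⟩
    · right
      have : i = iN := by
        apply Fin.ext
        simp only [hiN]
        have h1 : (i : ℕ) ≤ n := Nat.lt_succ_iff.mp i.2
        have h2 : (i : ℕ) ≠ n := fun he => hi (Fin.ext he)
        omega
      rw [this]
      rfl
  have hρσ' : ∀ i : Fin (n + 1), i ≠ iN → ρ i ∈ coneRays σ' := by
    intro i hi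
    rw [hσ'1]
    rcases Nat.lt_or_ge (i : ℕ) (n - 1) with h | h
    · exact Or.inl ⟨i, h, rfl⟩
    · right
      have : i = iN1 := by
        apply Fin.ext
        simp only [hiN1]
        have h1 : (i : ℕ) ≤ n := Nat.lt_succ_iff.mp i.2
        have h2 : (i : ℕ) ≠ n - 1 := fun he => hi (Fin.ext he)
        omega
      rw [this]
      rfl
  have hρτ : ∀ i : Fin (n + 1), (i : ℕ) < n - 1 → ρ i ∈ coneRays τ := by
    intro i hi
    rw [hτ1]
    exact ⟨i, hi, rfl⟩
  have hρray : ∀ i : Fin (n + 1), ρ i ∈ F.rayGens := by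
    intro i
    by_cases hi : i = iN1
    · subst hi
      exact Fan.coneRays_subset_rayGens hσ'c (hρσ' _ (fun h => hiNne h.symm))
    · exact Fan.coneRays_subset_rayGens hσc (hρσ i hi)
  have hρprim : ∀ i : Fin (n + 1), IsPrimitiveVec (ρ i) := fun i => (hρray i).1
  have hρsup : ∀ i : Fin (n + 1), ρ i ∈ F.support := by
    intro i
    by_cases hi : i = iN1
    · subst hi
      exact Fan.mem_support_iff.mpr ⟨σ', hσ'c, coneRays_subset (hρσ' _ (fun h => hiNne h.symm))⟩
    · exact Fan.mem_support_iff.mpr ⟨σ, hσc, coneRays_subset (hρσ i hi)⟩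
  have hρτmem : ∀ i : Fin (n + 1), (i : ℕ) < n - 1 → ρ i ∈ τ :=
    fun i hi => coneRays_subset (hρτ i hi)
  have haiN : 0 < a iN := han
  have haiN1 : a iN1 = 1 := han1
  -- positive and negative index sets
  set Ipos : Finset (Fin (n + 1)) := Finset.univ.filter (fun i => 0 < a i) with hIpos
  set Ineg : Finset (Fin (n + 1)) := Finset.univ.filter (fun i => a i < 0) with hIneg
  have hiNpos : iN ∈ Ipos := by simp [hIpos, haiN]
  have hiN1pos : iN1 ∈ Ipos := by simp [hIpos, haiN1]
  have hnegτ : ∀ i ∈ Ineg, (i : ℕ) < n - 1 := by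
    intro i hi
    have hai : a i < 0 := by
      have := Finset.mem_filter.mp hi
      exact this.2
    have h1 : i ≠ iN := fun h => by rw [h] at hai; linarith
    have h2 : i ≠ iN1 := fun h => by rw [h, haiN1] at hai; linarith
    have h3 : (i : ℕ) ≤ n := Nat.lt_succ_iff.mp i.2
    have h4 : (i : ℕ) ≠ n := fun he => h2 (Fin.ext he)
    have h5 : (i : ℕ) ≠ n - 1 := fun he => h1 (Fin.ext he)
    omega
  -- P as an image finset
  have hPmem : ∀ w : V n, w ∈ P ↔ ∃ i, 0 < a i ∧ w = ρ i := by
    intro w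
    rw [← Finset.mem_coe, hP]
    constructor
    · rintro ⟨i, hi, rfl⟩
      exact ⟨i, hi, rfl⟩
    · rintro ⟨i, hi, rfl⟩
      exact ⟨i, hi, rfl⟩
  have hρP : ∀ i, ρ i ∈ P ↔ i ∈ Ipos := by
    intro i
    rw [hPmem]
    constructor
    · rintro ⟨j, hj, hij⟩
      rw [hIpos, Finset.mem_filter]
      exact ⟨Finset.mem_univ i, by rwa [hinj hij]⟩
    · intro hi
      exact ⟨i, (Finset.mem_filter.mp hi).2, rfl⟩
  have hPim : P = Finset.image ρ Ipos := by
    ext w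
    rw [hPmem, Finset.mem_image]
    constructor
    · rintro ⟨i, hi, rfl⟩
      exact ⟨i, by simp [hIpos, hi], rfl⟩
    · rintro ⟨i, hi, rfl⟩
      exact ⟨i, (Finset.mem_filter.mp hi).2, rfl⟩
  -- the vectors u⁺ (over positive part) and v⁻ (over negative part)
  set vneg : V n := ∑ i ∈ Ineg, (-a i) • ρ i with hvneg
  set upos : V n := ∑ i ∈ Ipos, a i • ρ i with hupos
  have hvτ : vneg ∈ τ := by
    apply F.sum_mem hτc
    · intro i hi
      have : a i < 0 := (Finset.mem_filter.mp hi).2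
      linarith
    · intro i hi
      exact hρτmem i (hnegτ i hi)
  have huv : upos = vneg := by
    have hsplit := Finset.sum_filter_add_sum_filter_not Finset.univ
      (fun i => 0 < a i) (fun i => a i • ρ i)
    rw [hrel] at hsplit
    have hrest : ∑ i ∈ Finset.univ.filter (fun i => ¬ 0 < a i), a i • ρ i
        = ∑ i ∈ Ineg, a i • ρ i := by
      symm
      apply Finset.sum_subset
      · intro i hi
        rw [Finset.mem_filter] at hi ⊢
        exact ⟨hi.1, by linarith [hi.2]⟩
      · intro i hi hni
        rw [Finset.mem_filter] at hi hni
        have h1 : ¬ 0 < a i := hi.2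
        have h2 : ¬ a i < 0 := fun h => hni ⟨hi.1, h⟩
        have : a i = 0 := le_antisymm (not_lt.mp h1) (not_lt.mp h2)
        rw [this, zero_smul]
    rw [hrest] at hsplit
    have : ∑ i ∈ Ineg, a i • ρ i = -vneg := by
      rw [hvneg, ← Finset.sum_neg_distrib]
      exact Finset.sum_congr rfl fun i _ => by rw [neg_smul, neg_neg]
    rw [this] at hsplit
    have h2 : upos + -vneg = 0 := hsplit
    exact eq_of_sub_eq_zero (by rw [sub_eq_add_neg]; exact h2)
  -- τ-linearity of PL functions on vneg
  have hτlin : ∀ φ : V n → ℝ, IsPL F φ → φ vneg = ∑ i ∈ Ineg, (-a i) * φ (ρ i) := by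
    intro φ hφ
    rw [hvneg]
    exact hφ.linear_on_cone hτc Ineg _ _
      (fun i hi => by linarith [(Finset.mem_filter.mp hi).2])
      (fun i hi => hρτmem i (hnegτ i hi))
  -- formula for the wall functional
  have hlτ : ∀ φ : PLsub F, (∑ i, a i • evalPL F (ρ i)) φ
      = (∑ i ∈ Ipos, a i * (φ : V n → ℝ) (ρ i)) - (φ : V n → ℝ) vneg := by
    intro φ
    rw [sum_smul_evalPL_apply]
    rw [hτlin _ (PLsub.isPL φ)]
    have hsplit := Finset.sum_filter_add_sum_filter_not Finset.univ
      (fun i => 0 < a i) (fun i => a i * (φ : V n → ℝ) (ρ i))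
    have hrest : ∑ i ∈ Finset.univ.filter (fun i => ¬ 0 < a i), a i * (φ : V n → ℝ) (ρ i)
        = ∑ i ∈ Ineg, a i * (φ : V n → ℝ) (ρ i) := by
      symm
      apply Finset.sum_subset
      · intro i hi
        rw [Finset.mem_filter] at hi ⊢
        exact ⟨hi.1, by linarith [hi.2]⟩
      · intro i hi hni
        rw [Finset.mem_filter] at hi hni
        have h2 : ¬ a i < 0 := fun h => hni ⟨hi.1, h⟩
        have : a i = 0 := le_antisymm (not_lt.mp hi.2) (not_lt.mp h2)
        rw [this, zero_mul]
    rw [hrest] at hsplit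
    rw [← hsplit]
    have : ∑ i ∈ Ineg, (-a i) * (φ : V n → ℝ) (ρ i)
        = - ∑ i ∈ Ineg, a i * (φ : V n → ℝ) (ρ i) := by
      rw [← Finset.sum_neg_distrib]
      exact Finset.sum_congr rfl fun i _ => by ring
    rw [this]
    ring
  -- (1b): P is contained in no cone of the fan
  have hPnc : ∀ γ ∈ F.cones, ¬ (↑P : Set (V n)) ⊆ γ := by
    intro γ hγ hsub
    apply hnz
    apply LinearMap.ext
    intro φ
    rw [LinearMap.zero_apply, hlτ φ]
    have hρgam : ∀ i ∈ Ipos, ρ i ∈ γ := by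
      intro i hi
      exact hsub (by rw [Finset.mem_coe, hρP]; exact hi)
    have h1 : (φ : V n → ℝ) upos = ∑ i ∈ Ipos, a i * (φ : V n → ℝ) (ρ i) := by
      rw [hupos]
      exact (PLsub.isPL φ).linear_on_cone hγ Ipos _ _
        (fun i hi => le_of_lt (Finset.mem_filter.mp hi).2) hρgam
    rw [← h1, ← huv]
    ring
  -- the strictly convex function
  obtain ⟨φs, hφsPL, hφsSC⟩ := hqp
  set Φs : PLsub F := ⟨φs, hφsPL⟩ with hΦs
  -- the positive primitive points have no common cone
  have hptsnc : ¬ ∃ γ ∈ F.cones, ∀ i ∈ Ipos, ρ i ∈ γ := by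
    rintro ⟨γ, hγ, hmem⟩
    apply hPnc γ hγ
    intro w hw
    rw [Finset.mem_coe, hPmem] at hw
    obtain ⟨i, hi, rfl⟩ := hw
    exact hmem i (by simp [hIpos, hi])
  constructor
  · -- P is a primitive collection
    refine ⟨?_, ?_, ?_⟩
    · intro w hw
      rw [Finset.mem_coe, hPmem] at hw
      obtain ⟨i, _, rfl⟩ := hw
      exact hρray i
    · exact hPnc
    · -- every proper subset lies in some cone
      intro Q hQ
      obtain ⟨x, hxP, hxQ⟩ := Finset.exists_of_ssubset hQ
      have hQsub : Q ⊆ P.erase x := Finset.subset_erase.mpr ⟨hQ.subset, hxQ⟩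
      obtain ⟨i₀, hi₀pos, rfl⟩ := (hPmem x).mp hxP
      have hi₀Ipos : i₀ ∈ Ipos := by simp [hIpos, hi₀pos]
      have hQmem : ∀ w ∈ Q, ∃ i ∈ Ipos, i ≠ i₀ ∧ w = ρ i := by
        intro w hw
        have h1 := Finset.mem_erase.mp (hQsub hw)
        obtain ⟨j, hj, rfl⟩ := (hPmem w).mp h1.2
        refine ⟨j, by simp [hIpos, hj], ?_, rfl⟩
        intro he
        exact h1.1 (by rw [he])
      by_cases hcase1 : i₀ = iN1
      · refine ⟨σ, hσc, ?_⟩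
        intro w hw
        obtain ⟨i, _, hine, rfl⟩ := hQmem w hw
        exact coneRays_subset (hρσ i (by rwa [← hcase1]))
      by_cases hcase2 : i₀ = iN
      · refine ⟨σ', hσ'c, ?_⟩
        intro w hw
        obtain ⟨i, _, hine, rfl⟩ := hQmem w hw
        exact coneRays_subset (hρσ' i (by rwa [← hcase2]))
      -- hard case: i₀ corresponds to a wall ray, use extremality
      have hi₀lt : (i₀ : ℕ) < n - 1 := by
        have h3 : (i₀ : ℕ) ≤ n := Nat.lt_succ_iff.mp i₀.2
        have h4 : (i₀ : ℕ) ≠ n := fun he => hcase1 (Fin.ext he)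
        have h5 : (i₀ : ℕ) ≠ n - 1 := fun he => hcase2 (Fin.ext he)
        omega
      set J : Finset (Fin (n + 1)) := Ipos.erase i₀ with hJ
      have hJpos : ∀ i ∈ J, 0 < a i := fun i hi =>
        (Finset.mem_filter.mp (Finset.mem_of_mem_erase hi)).2
      set xj : V n := ∑ i ∈ J, a i • ρ i with hxj
      have hxjsup : xj ∈ F.support := by
        rw [hxj]
        exact Fan.support_sum_mem hconv hconesne J _ (fun i hi =>
          Fan.support_smul_mem (hρsup i) (le_of_lt (hJpos i hi)))
      have hvsplit : vneg = a i₀ • ρ i₀ + xj := by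
        rw [← huv, hupos, hxj]
        exact (Finset.add_sum_erase _ (fun i => a i • ρ i) hi₀Ipos).symm
      set ℓ₁ : Module.Dual ℝ (PLsub F) :=
        (∑ i ∈ J, a i • evalPL F (ρ i)) - evalPL F xj with hℓ₁
      set ℓ₂ : Module.Dual ℝ (PLsub F) :=
        (a i₀ • evalPL F (ρ i₀) + evalPL F xj) - evalPL F vneg with hℓ₂
      have hℓ₁app : ∀ φ : PLsub F,
          ℓ₁ φ = (∑ i ∈ J, a i * (φ : V n → ℝ) (ρ i)) - (φ : V n → ℝ) xj := by
        intro φ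
        rw [hℓ₁, LinearMap.sub_apply, sum_smul_evalPL_apply]
        rfl
      have hℓ₂app : ∀ φ : PLsub F,
          ℓ₂ φ = (a i₀ * (φ : V n → ℝ) (ρ i₀) + (φ : V n → ℝ) xj)
            - (φ : V n → ℝ) vneg := by
        intro φ
        rw [hℓ₂, LinearMap.sub_apply, LinearMap.add_apply, LinearMap.smul_apply]
        rfl
      have hNE1 : ℓ₁ ∈ NE F := by
        intro φ hφ
        rw [hℓ₁app, sub_nonneg, hxj]
        exact IsPL.sublinear (PLsub.isPL φ) hφ hconv hconesne J a ρ
          (fun i hi => le_of_lt (hJpos i hi)) (fun i _ => hρsup i)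
      have hNE2 : ℓ₂ ∈ NE F := by
        intro φ hφ
        rw [hℓ₂app, sub_nonneg, hvsplit]
        have h1 : (φ : V n → ℝ) (a i₀ • ρ i₀ + xj)
            ≤ (φ : V n → ℝ) (a i₀ • ρ i₀) + (φ : V n → ℝ) xj :=
          hφ _ (Fan.support_smul_mem (hρsup i₀) (le_of_lt hi₀pos)) _ hxjsup
        have h2 : (φ : V n → ℝ) (a i₀ • ρ i₀) = a i₀ * (φ : V n → ℝ) (ρ i₀) :=
          IsPL.homog (PLsub.isPL φ) (hρsup i₀) (le_of_lt hi₀pos)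
        linarith
      have hdecomp : (∑ i, a i • evalPL F (ρ i)) = ℓ₁ + ℓ₂ := by
        apply LinearMap.ext
        intro φ
        rw [LinearMap.add_apply, hℓ₁app, hℓ₂app, hlτ]
        have hsplit : ∑ i ∈ Ipos, a i * (φ : V n → ℝ) (ρ i)
            = a i₀ * (φ : V n → ℝ) (ρ i₀) + ∑ i ∈ J, a i * (φ : V n → ℝ) (ρ i) :=
          (Finset.add_sum_erase _ _ hi₀Ipos).symm
        rw [hsplit]
        ring
      obtain ⟨⟨c, hc0, hcEq⟩, -⟩ := hext ℓ₁ hNE1 ℓ₂ hNE2 hdecomp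
      obtain ⟨φh, hhPL, hh1, hh0, hhnn⟩ := Fan.exists_hat hsimp (hρray i₀)
      set Φh : PLsub F := ⟨φh, hhPL⟩ with hΦh
      have hΦhco : (Φh : V n → ℝ) = φh := rfl
      have hval1 : ℓ₁ Φh = - φh xj := by
        rw [hℓ₁app]
        have hz : ∑ i ∈ J, a i * (Φh : V n → ℝ) (ρ i) = 0 := by
          apply Finset.sum_eq_zero
          intro i hi
          have hine : i ≠ i₀ := (Finset.mem_erase.mp hi).1
          rw [hΦhco, hh0 (ρ i) (hρray i) (fun he => hine (hinj he)), mul_zero]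
        rw [hz, hΦhco]
        ring
      have hval2 : (∑ i, a i • evalPL F (ρ i)) Φh = a i₀ := by
        rw [sum_smul_evalPL_apply]
        rw [Finset.sum_eq_single i₀]
        · rw [hΦhco, hh1, mul_one]
        · intro i _ hine
          rw [hΦhco, hh0 (ρ i) (hρray i) (fun he => hine (hinj he)), mul_zero]
        · intro h; exact absurd (Finset.mem_univ i₀) h
      have hceq : - φh xj = c * a i₀ := by
        have h3 := congrArg (fun l : Module.Dual ℝ (PLsub F) => l Φh) hcEq
        simp only [LinearMap.smul_apply, smul_eq_mul] at h3
        rw [hval1, hval2] at h3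
        exact h3
      have hc_zero : c = 0 := by
        rcases lt_or_eq_of_le hc0 with h | h
        · exfalso
          have h1 : 0 < c * a i₀ := mul_pos h hi₀pos
          have h2 : (0:ℝ) ≤ φh xj := hhnn xj hxjsup
          linarith
        · exact h.symm
      rw [hc_zero, zero_smul] at hcEq
      have heq : φs (∑ i ∈ J, a i • ρ i) = ∑ i ∈ J, φs (a i • ρ i) := by
        have h4 : ℓ₁ Φs = 0 := by rw [hcEq]; rfl
        rw [hℓ₁app] at h4
        have hco : (Φs : V n → ℝ) = φs := rfl
        rw [hco] at h4
        have h5 : ∀ i ∈ J, φs (a i • ρ i) = a i * φs (ρ i) := fun i hi =>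
          hφsPL.homog (hρsup i) (le_of_lt (hJpos i hi))
        rw [Finset.sum_congr rfl h5, ← hxj]
        linarith
      obtain ⟨γ, hγ, hγmem⟩ := hφsSC.common_cone hφsPL hconv hconesne J
        (fun i => a i • ρ i)
        (fun i hi => Fan.support_smul_mem (hρsup i) (le_of_lt (hJpos i hi))) heq
      refine ⟨γ, hγ, ?_⟩
      intro w hw
      obtain ⟨i, hiI, hine, rfl⟩ := hQmem w hw
      have hiJ : i ∈ J := Finset.mem_erase.mpr ⟨hine, hiI⟩
      have h6 : a i • ρ i ∈ γ := hγmem i hiJ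
      have h7 := F.smul_mem hγ (le_of_lt (inv_pos.mpr (hJpos i hiJ))) h6
      rwa [smul_smul, inv_mul_cancel₀ (ne_of_gt (hJpos i hiJ)), one_smul] at h7
  · -- the primitive relation is proportional to the wall relation
    intro S b hPR
    obtain ⟨σm, ⟨hσmc, huσm, hσmmin⟩, hScr, hSind, hb, hsum⟩ := hPR
    have hΦsco : (Φs : V n → ℝ) = φs := rfl
    set u : V n := ∑ w ∈ P, w with hu
    have hu_Ipos : u = ∑ i ∈ Ipos, ρ i := by
      rw [hu, hPim]
      exact Finset.sum_image (fun i _ j _ h => hinj h)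
    have hIposne : Ipos.Nonempty := ⟨iN, hiNpos⟩
    have husup : u ∈ F.support := Fan.mem_support_iff.mpr ⟨σm, hσmc, huσm⟩
    have hSσm : ∀ s ∈ S, s ∈ σm := fun s hs => coneRays_subset (hScr hs)
    have hSray : ∀ s ∈ S, s ∈ F.rayGens := fun s hs =>
      Fan.coneRays_subset_rayGens hσmc (hScr hs)
    set lP : Module.Dual ℝ (PLsub F) :=
      (∑ i ∈ Ipos, evalPL F (ρ i)) - evalPL F u with hlP
    have hlPapp : ∀ φ : PLsub F,
        lP φ = (∑ i ∈ Ipos, (φ : V n → ℝ) (ρ i)) - (φ : V n → ℝ) u := by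
      intro φ
      rw [hlP, LinearMap.sub_apply, sum_evalPL_apply]
      rfl
    -- Step A: extremality forces lP to be a multiple of the wall functional
    set α : ℝ := Ipos.inf' hIposne a with hα
    have hαle : ∀ i ∈ Ipos, α ≤ a i := fun i hi => Finset.inf'_le a hi
    have hαpos : 0 < α := by
      rw [hα, Finset.lt_inf'_iff]
      exact fun i hi => (Finset.mem_filter.mp hi).2
    set r : Module.Dual ℝ (PLsub F) :=
      (∑ i ∈ Ipos, (a i - α) • evalPL F (ρ i)) + (α • evalPL F u - evalPL F vneg)
      with hr
    have hrapp : ∀ φ : PLsub F,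
        r φ = (∑ i ∈ Ipos, (a i - α) * (φ : V n → ℝ) (ρ i))
          + (α * (φ : V n → ℝ) u - (φ : V n → ℝ) vneg) := by
      intro φ
      rw [hr, LinearMap.add_apply, sum_smul_evalPL_apply, LinearMap.sub_apply,
        LinearMap.smul_apply]
      rfl
    have hNElP : α • lP ∈ NE F := by
      intro φ hφ
      rw [LinearMap.smul_apply, smul_eq_mul, hlPapp]
      have h1 : (φ : V n → ℝ) u ≤ ∑ i ∈ Ipos, (φ : V n → ℝ) (ρ i) := by
        rw [hu_Ipos]
        exact IsPL.sublinear_plain (PLsub.isPL φ) hφ hconv hconesne Ipos ρ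
          (fun i _ => hρsup i)
      have h2 : 0 ≤ (∑ i ∈ Ipos, (φ : V n → ℝ) (ρ i)) - (φ : V n → ℝ) u := by
        linarith
      exact mul_nonneg (le_of_lt hαpos) h2
    have hvid : vneg = (∑ i ∈ Ipos, (a i - α) • ρ i) + α • u := by
      rw [← huv, hupos, hu_Ipos, Finset.smul_sum, ← Finset.sum_add_distrib]
      apply Finset.sum_congr rfl
      intro i _
      rw [sub_smul, sub_add_cancel]
    have hNEr : r ∈ NE F := by
      intro φ hφ
      rw [hrapp]
      have hysup : (∑ i ∈ Ipos, (a i - α) • ρ i) ∈ F.support :=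
        Fan.support_sum_mem hconv hconesne Ipos _ (fun i hi =>
          Fan.support_smul_mem (hρsup i) (by linarith [hαle i hi, hαpos]))
      have h1 : (φ : V n → ℝ) vneg
          ≤ (φ : V n → ℝ) (∑ i ∈ Ipos, (a i - α) • ρ i) + (φ : V n → ℝ) (α • u) := by
        rw [hvid]
        exact hφ _ hysup _ (Fan.support_smul_mem husup (le_of_lt hαpos))
      have h2 : (φ : V n → ℝ) (α • u) = α * (φ : V n → ℝ) u :=
        IsPL.homog (PLsub.isPL φ) husup (le_of_lt hαpos)
      have h3 : (φ : V n → ℝ) (∑ i ∈ Ipos, (a i - α) • ρ i)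
          ≤ ∑ i ∈ Ipos, (a i - α) * (φ : V n → ℝ) (ρ i) :=
        IsPL.sublinear (PLsub.isPL φ) hφ hconv hconesne Ipos _ ρ
          (fun i hi => by linarith [hαle i hi]) (fun i _ => hρsup i)
      linarith
    have hdecomp2 : (∑ i, a i • evalPL F (ρ i)) = (α • lP) + r := by
      apply LinearMap.ext
      intro φ
      rw [LinearMap.add_apply, LinearMap.smul_apply, smul_eq_mul, hlPapp, hrapp,
        hlτ]
      have e1 : ∑ i ∈ Ipos, (a i - α) * (φ : V n → ℝ) (ρ i)
          = (∑ i ∈ Ipos, a i * (φ : V n → ℝ) (ρ i))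
            - α * ∑ i ∈ Ipos, (φ : V n → ℝ) (ρ i) := by
        rw [Finset.mul_sum, ← Finset.sum_sub_distrib]
        exact Finset.sum_congr rfl fun i _ => by ring
      rw [e1]
      ring
    obtain ⟨⟨c2, hc20, hc2Eq⟩, -⟩ := hext _ hNElP r hNEr hdecomp2
    set lam : ℝ := α⁻¹ * c2 with hlam
    have hlPlam : lP = lam • (∑ i, a i • evalPL F (ρ i)) := by
      have h1 := congrArg (fun l : Module.Dual ℝ (PLsub F) => (α⁻¹ : ℝ) • l) hc2Eq
      simp only [smul_smul, inv_mul_cancel₀ (ne_of_gt hαpos), one_smul] at h1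
      exact h1
    -- Step B: every element of S is one of the ρ i
    have hSsub : ∀ s ∈ S, ∃ i, s = ρ i := by
      intro s hs
      by_contra hcon
      push_neg at hcon
      obtain ⟨φh, hhPL, hh1, hh0, hhnn⟩ := Fan.exists_hat hsimp (hSray s hs)
      set Φh : PLsub F := ⟨φh, hhPL⟩ with hΦh
      have hΦhco : (Φh : V n → ℝ) = φh := rfl
      obtain ⟨m, hm⟩ := hhPL σm hσmc
      have hφhu : φh u = b s := by
        rw [show φh u = m u from hm u huσm]
        have h7b : m u = ∑ s' ∈ S, b s' * m s' := by
          rw [hsum, map_sum]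
          exact Finset.sum_congr rfl fun s' _ => by rw [map_smul]; rfl
        rw [h7b]
        rw [Finset.sum_eq_single s]
        · rw [← hm s (hSσm s hs), hh1, mul_one]
        · intro s' hs' hne
          rw [← hm s' (hSσm s' hs'), hh0 s' (hSray s' hs') hne, mul_zero]
        · intro h; exact absurd hs h
      have hlPΦh : lP Φh = - b s := by
        rw [hlPapp]
        have hz : ∑ i ∈ Ipos, (Φh : V n → ℝ) (ρ i) = 0 := by
          apply Finset.sum_eq_zero
          intro i _
          rw [hΦhco, hh0 (ρ i) (hρray i) (fun he => hcon i he.symm)]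
        rw [hz, hΦhco, hφhu]
        ring
      have hlτΦh : (∑ i, a i • evalPL F (ρ i)) Φh = 0 := by
        rw [sum_smul_evalPL_apply]
        apply Finset.sum_eq_zero
        intro i _
        rw [hΦhco, hh0 (ρ i) (hρray i) (fun he => hcon i he.symm), mul_zero]
      have h5 : lP Φh = lam * ((∑ i, a i • evalPL F (ρ i)) Φh) := by
        rw [hlPlam]; rfl
      rw [hlPΦh, hlτΦh, mul_zero] at h5
      have := hb s hs
      linarith
    -- Step C: index set of S and the relation vector d
    set IS : Finset (Fin (n + 1)) := Finset.univ.filter (fun i => ρ i ∈ S) with hIS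
    have hISmem : ∀ i, i ∈ IS ↔ ρ i ∈ S := by
      intro i
      rw [hIS, Finset.mem_filter]
      exact ⟨fun h => h.2, fun h => ⟨Finset.mem_univ i, h⟩⟩
    have hSim : S = Finset.image ρ IS := by
      ext s
      constructor
      · intro hs
        obtain ⟨i, rfl⟩ := hSsub s hs
        exact Finset.mem_image_of_mem ρ ((hISmem i).mpr hs)
      · intro hs
        obtain ⟨i, hi, rfl⟩ := Finset.mem_image.mp hs
        exact (hISmem i).mp hi
    set d : Fin (n + 1) → ℝ :=
      fun i => (if i ∈ Ipos then (1:ℝ) else 0) - (if i ∈ IS then b (ρ i) else 0)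
      with hd
    have hdval : ∀ i, d i
        = (if i ∈ Ipos then (1:ℝ) else 0) - (if i ∈ IS then b (ρ i) else 0) :=
      fun i => rfl
    have hdrel : ∑ i, d i • ρ i = 0 := by
      have e1 : ∑ i, (if i ∈ Ipos then (1:ℝ) else 0) • ρ i = ∑ i ∈ Ipos, ρ i := by
        have : ∀ i : Fin (n + 1), (if i ∈ Ipos then (1:ℝ) else 0) • ρ i
            = if i ∈ Ipos then ρ i else 0 := by
          intro i
          by_cases h : i ∈ Ipos
          · rw [if_pos h, if_pos h, one_smul]
          · rw [if_neg h, if_neg h, zero_smul]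
        rw [Finset.sum_congr rfl fun i _ => this i, Finset.sum_ite_mem,
          Finset.univ_inter]
      have e2 : ∑ i, (if i ∈ IS then b (ρ i) else 0) • ρ i
          = ∑ i ∈ IS, b (ρ i) • ρ i := by
        have : ∀ i : Fin (n + 1), (if i ∈ IS then b (ρ i) else 0) • ρ i
            = if i ∈ IS then b (ρ i) • ρ i else 0 := by
          intro i
          by_cases h : i ∈ IS
          · rw [if_pos h, if_pos h]
          · rw [if_neg h, if_neg h, zero_smul]
        rw [Finset.sum_congr rfl fun i _ => this i, Finset.sum_ite_mem,
          Finset.univ_inter]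
      have e3 : ∑ i ∈ IS, b (ρ i) • ρ i = ∑ s ∈ S, b s • s := by
        rw [hSim, Finset.sum_image (fun i _ j _ h => hinj h)]
      calc ∑ i, d i • ρ i
          = (∑ i, (if i ∈ Ipos then (1:ℝ) else 0) • ρ i)
            - ∑ i, (if i ∈ IS then b (ρ i) else 0) • ρ i := by
            rw [← Finset.sum_sub_distrib]
            exact Finset.sum_congr rfl fun i _ => by rw [hdval i, sub_smul]
        _ = (∑ i ∈ Ipos, ρ i) - ∑ s ∈ S, b s • s := by rw [e1, e2, e3]
        _ = u - u := by rw [← hu_Ipos, ← hsum]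
        _ = 0 := sub_self u
    -- linear independence of the first n rays
    have hgind : LinearIndependent ℝ (fun k : Fin n => ρ (Fin.castSucc k)) := by
      have hrange : Set.range (fun k : Fin n => ρ (Fin.castSucc k)) = coneRays σ := by
        rw [hσ1]
        ext x
        constructor
        · rintro ⟨k, rfl⟩
          rcases Nat.lt_or_ge (k : ℕ) (n - 1) with h | h
          · exact Or.inl ⟨Fin.castSucc k, h, rfl⟩
          · right
            have hk : Fin.castSucc k = iN := by
              apply Fin.ext
              simp only [Fin.coe_castSucc, hiN]
              omega
            exact congrArg ρ hk
        · rintro (⟨i, hi, rfl⟩ | h)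
          · have hi' : (i : ℕ) < n - 1 := hi
            exact ⟨⟨(i : ℕ), by omega⟩, congrArg ρ (Fin.ext rfl)⟩
          · have h' : x = ρ iN := h
            have hk : Fin.castSucc (⟨n - 1, by omega⟩ : Fin n) = iN := Fin.ext rfl
            exact ⟨⟨n - 1, by omega⟩, (congrArg ρ hk).trans h'.symm⟩
      rw [linearIndependent_iff_card_eq_finrank_span, hrange, Fintype.card_fin]
      show n = Module.finrank ℝ (Submodule.span ℝ (coneRays σ))
      have hsp : Submodule.span ℝ (coneRays σ) = Submodule.span ℝ σ := by
        conv_rhs => rw [hσgen]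
        rw [span_coneGen]
      rw [hsp]
      exact hσ.2.symm
    have hcoef : ∀ e : Fin (n + 1) → ℝ, (∑ i, e i • ρ i) = 0 → e iN1 = 0 →
        ∀ i, e i = 0 := by
      intro e hsum0 hlast
      have hlast' : (Fin.last n) = iN1 := Fin.ext rfl
      rw [Fin.sum_univ_castSucc] at hsum0
      have h0 : e (Fin.last n) = 0 := by rw [hlast']; exact hlast
      rw [h0, zero_smul, add_zero] at hsum0
      have hall := Fintype.linearIndependent_iff.mp hgind
        (fun k => e (Fin.castSucc k)) hsum0
      intro i
      induction i using Fin.lastCases with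
      | last => exact h0
      | cast k => exact hall k
    set μ : ℝ := d iN1 with hμ
    have hdμ : ∀ i, d i = μ * a i := by
      have h1 : ∑ i, (d i - μ * a i) • ρ i = 0 := by
        have : ∀ i : Fin (n + 1), (d i - μ * a i) • ρ i
            = d i • ρ i - μ • (a i • ρ i) := by
          intro i
          rw [sub_smul, smul_smul]
        rw [Finset.sum_congr rfl fun i _ => this i, Finset.sum_sub_distrib,
          hdrel, ← Finset.smul_sum, hrel, smul_zero, sub_zero]
      have h2 : d iN1 - μ * a iN1 = 0 := by
        rw [haiN1, mul_one, hμ, sub_self]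
      intro i
      have := hcoef _ h1 h2 i
      linarith
    -- Step D: positivity of μ
    have hlτΦspos : 0 < (∑ i, a i • evalPL F (ρ i)) Φs := by
      rw [hlτ, hΦsco]
      have hnc2 : ¬ ∃ γ ∈ F.cones, ∀ i ∈ Ipos, a i • ρ i ∈ γ := by
        rintro ⟨γ, hγ, hmem⟩
        apply hptsnc
        refine ⟨γ, hγ, ?_⟩
        intro i hi
        have hipos : 0 < a i := (Finset.mem_filter.mp hi).2
        have h6 := F.smul_mem hγ (le_of_lt (inv_pos.mpr hipos)) (hmem i hi)
        rwa [smul_smul, inv_mul_cancel₀ (ne_of_gt hipos), one_smul] at h6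
      have hsup2 : ∀ i ∈ Ipos, a i • ρ i ∈ F.support := fun i hi =>
        Fan.support_smul_mem (hρsup i) (le_of_lt (Finset.mem_filter.mp hi).2)
      have hstrict := hφsSC.strict_sublinear hφsPL hconv hconesne Ipos
        (fun i => a i • ρ i) hsup2 hnc2
      have e4 : ∀ i ∈ Ipos, φs (a i • ρ i) = a i * φs (ρ i) := fun i hi =>
        hφsPL.homog (hρsup i) (le_of_lt (Finset.mem_filter.mp hi).2)
      rw [Finset.sum_congr rfl e4] at hstrict
      have e5 : φs vneg = φs (∑ i ∈ Ipos, a i • ρ i) := by rw [← huv, hupos]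
      linarith
    have hlPΦspos : 0 < lP Φs := by
      rw [hlPapp, hΦsco]
      have hstrict := hφsSC.strict_sublinear hφsPL hconv hconesne Ipos ρ
        (fun i _ => hρsup i) hptsnc
      rw [hu_Ipos]
      linarith
    have hlPΦsd : lP Φs = ∑ i, d i * φs (ρ i) := by
      rw [hlPapp, hΦsco]
      obtain ⟨m, hm⟩ := hφsPL σm hσmc
      have h7 : φs u = ∑ i ∈ IS, b (ρ i) * φs (ρ i) := by
        rw [show φs u = m u from hm u huσm]
        have h7b : m u = ∑ s' ∈ S, b s' * m s' := by
          rw [hsum, map_sum]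
          exact Finset.sum_congr rfl fun s' _ => by rw [map_smul]; rfl
        have h7c : ∑ s' ∈ S, b s' * m s' = ∑ s' ∈ S, b s' * φs s' :=
          Finset.sum_congr rfl fun s' hs' => by rw [hm s' (hSσm s' hs')]
        rw [h7b, h7c, hSim, Finset.sum_image (fun i _ j _ h => hinj h)]
      rw [h7]
      have e1 : ∑ i ∈ Ipos, φs (ρ i)
          = ∑ i, (if i ∈ Ipos then (1:ℝ) else 0) * φs (ρ i) := by
        have : ∀ i : Fin (n + 1), (if i ∈ Ipos then (1:ℝ) else 0) * φs (ρ i)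
            = if i ∈ Ipos then φs (ρ i) else 0 := by
          intro i
          by_cases h : i ∈ Ipos
          · rw [if_pos h, if_pos h, one_mul]
          · rw [if_neg h, if_neg h, zero_mul]
        rw [Finset.sum_congr rfl fun i _ => this i, Finset.sum_ite_mem,
          Finset.univ_inter]
      have e2 : ∑ i ∈ IS, b (ρ i) * φs (ρ i)
          = ∑ i, (if i ∈ IS then b (ρ i) else 0) * φs (ρ i) := by
        have : ∀ i : Fin (n + 1), (if i ∈ IS then b (ρ i) else 0) * φs (ρ i)
            = if i ∈ IS then b (ρ i) * φs (ρ i) else 0 := by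
          intro i
          by_cases h : i ∈ IS
          · rw [if_pos h, if_pos h]
          · rw [if_neg h, if_neg h, zero_mul]
        rw [Finset.sum_congr rfl fun i _ => this i, Finset.sum_ite_mem,
          Finset.univ_inter]
      rw [e1, e2, ← Finset.sum_sub_distrib]
      exact Finset.sum_congr rfl fun i _ => by rw [hdval i, sub_mul]
    have hμpos : 0 < μ := by
      have h8 : lP Φs = μ * ((∑ i, a i • evalPL F (ρ i)) Φs) := by
        rw [hlPΦsd, sum_smul_evalPL_apply, Finset.mul_sum, hΦsco]
        exact Finset.sum_congr rfl fun i _ => by rw [hdμ i]; ring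
      by_contra hle
      push_neg at hle
      have h9 := mul_le_mul_of_nonneg_right hle (le_of_lt hlτΦspos)
      rw [zero_mul] at h9
      linarith
    -- Step E: conclusion
    refine ⟨μ, hμpos, ?_⟩
    funext w
    rw [Pi.smul_apply, smul_eq_mul]
    by_cases hw : ∃ i, w = ρ i
    · obtain ⟨i₀, rfl⟩ := hw
      have hRHS : ∑ i, (if ρ i₀ = ρ i then a i else 0) = a i₀ := by
        have hs := Finset.sum_eq_single_of_mem
          (f := fun i => if ρ i₀ = ρ i then a i else 0) i₀ (Finset.mem_univ i₀)
          (fun i _ hne => if_neg (fun he => hne (hinj he.symm)))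
        rw [hs]
        exact if_pos rfl
      have hLHS : primVec P S b (ρ i₀) = d i₀ := by
        rw [hdval i₀]
        unfold primVec
        by_cases h1 : ρ i₀ ∈ P <;> by_cases h2 : ρ i₀ ∈ S
        · rw [if_pos h1, if_pos h2, if_pos ((hρP i₀).mp h1),
            if_pos ((hISmem i₀).mpr h2)]
        · rw [if_pos h1, if_neg h2, if_pos ((hρP i₀).mp h1),
            if_neg (fun h => h2 ((hISmem i₀).mp h)), sub_zero]
        · rw [if_neg h1, if_pos h2, if_neg (fun h => h1 ((hρP i₀).mpr h)),
            if_pos ((hISmem i₀).mpr h2), zero_sub]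
        · rw [if_neg h1, if_neg h2, if_neg (fun h => h1 ((hρP i₀).mpr h)),
            if_neg (fun h => h2 ((hISmem i₀).mp h)), sub_zero]
      rw [hRHS, hLHS, hdμ i₀]
    · push_neg at hw
      have hwP : w ∉ P := by
        intro h
        obtain ⟨i, _, he⟩ := (hPmem w).mp h
        exact hw i he
      have hwS : w ∉ S := by
        intro h
        obtain ⟨i, he⟩ := hSsub w h
        exact hw i he
      have hRHS : ∑ i, (if w = ρ i then a i else 0) = (0:ℝ) :=
        Finset.sum_eq_zero fun i _ => if_neg (hw i)
      rw [hRHS, mul_zero]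
      unfold primVec
      rw [if_neg hwP, if_neg hwS]
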